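/- arXiv:quant-ph/0509059 — 4 statements merged into one kernel-verified Lean document; each statement's English description precedes it below -/
import Mathlib

section
/- If G is an n-vertex circulant graph whose adjacency matrix has maximum eigenvalue multiplicity bounded by a constant c (independent of n), then the continuous-time quantum walk on G starting at vertex 0 is average uniform mixing: every vertex has average probability p̄_j = O(1/n); concretely, |p̄_j − 1/n| ≤ c(c−1)/(2n) for all j. -/
open Matrix Complex Filter Real
open scoped Classical

set_option linter.unusedSectionVars false

namespace CircAux

variable (n : ℕ) [NeZero n]

noncomputable def zeta : ℂ := Complex.exp (2 * Real.pi * Complex.I / n)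

noncomputable def chi (m : ZMod n) : ℂ := zeta n ^ m.val

lemma zeta_pow_n : zeta n ^ n = 1 := by
  rw [zeta, ← Complex.exp_nat_mul]
  have hn : (n : ℂ) ≠ 0 := Nat.cast_ne_zero.mpr (NeZero.ne n)
  rw [mul_div_cancel₀ _ hn]
  simpa [mul_comm] using Complex.exp_two_pi_mul_I

lemma zeta_pow_mod (m : ℕ) : zeta n ^ (m % n) = zeta n ^ m := by
  conv_rhs => rw [← Nat.div_add_mod m n]
  rw [pow_add, pow_mul, zeta_pow_n, one_pow, one_mul]

lemma chi_natCast (m : ℕ) : chi n (m : ZMod n) = zeta n ^ m := by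
  rw [chi, ZMod.val_natCast, zeta_pow_mod]

lemma chi_add (x y : ZMod n) : chi n (x + y) = chi n x * chi n y := by
  have := chi_natCast n (x.val + y.val)
  rw [Nat.cast_add, ZMod.natCast_val, ZMod.natCast_val, ZMod.cast_id, ZMod.cast_id] at this
  rw [this, pow_add, chi, chi]

lemma chi_zero : chi n 0 = 1 := by simp [chi]

lemma abs_chi (x : ZMod n) : ‖chi n x‖ = 1 := by
  rw [chi, norm_pow, zeta]
  rw [show 2 * (Real.pi:ℂ) * Complex.I / n = ((2 * Real.pi / n : ℝ)) * Complex.I by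
    push_cast; ring]
  rw [Complex.norm_exp_ofReal_mul_I, one_pow]

lemma chi_ne_zero (x : ZMod n) : chi n x ≠ 0 := by
  intro h
  have := abs_chi n x
  rw [h] at this; simp at this

lemma conj_chi (x : ZMod n) : (starRingEnd ℂ) (chi n x) = chi n (-x) := by
  have h1 : chi n x * chi n (-x) = 1 := by
    rw [← chi_add, add_neg_cancel, chi_zero]
  have h2 : chi n x * (starRingEnd ℂ) (chi n x) = 1 := by
    rw [Complex.mul_conj, Complex.normSq_eq_norm_sq, abs_chi]; norm_num
  have := h1.trans h2.symm
  exact (mul_left_cancel₀ (chi_ne_zero n x) this).symm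

lemma isPrimRoot : IsPrimitiveRoot (zeta n) n :=
  Complex.isPrimitiveRoot_exp n (NeZero.ne n)

lemma chi_eq_one_iff (x : ZMod n) : chi n x = 1 ↔ x = 0 := by
  rw [chi, (isPrimRoot n).pow_eq_one_iff_dvd]
  constructor
  · intro h
    have := Nat.eq_zero_of_dvd_of_lt h (ZMod.val_lt x)
    · exact (ZMod.val_eq_zero x).mp (by omega)
  · rintro rfl; simp

lemma sum_val_fun (f : ℕ → ℂ) : ∑ k : ZMod n, f k.val = ∑ i ∈ Finset.range n, f i := by
  refine Finset.sum_nbij' (fun k => k.val) (fun i => (i : ZMod n)) ?_ ?_ ?_ ?_ ?_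
  · intro k _; exact Finset.mem_range.mpr (ZMod.val_lt k)
  · intro i _; exact Finset.mem_univ _
  · intro k _; exact ZMod.natCast_rightInverse k
  · intro i hi; exact ZMod.val_cast_of_lt (Finset.mem_range.mp hi)
  · intro k _; rfl

lemma sum_chi (x : ZMod n) : ∑ k : ZMod n, chi n (x * k) = if x = 0 then (n : ℂ) else 0 := by
  have key : ∀ k : ZMod n, chi n (x * k) = (chi n x) ^ k.val := by
    intro k
    have : x * k = ((x.val * k.val : ℕ) : ZMod n) := by push_cast; simp [ZMod.natCast_val, ZMod.cast_id]
    rw [this, chi_natCast, chi, ← pow_mul]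
  simp_rw [key]
  rw [sum_val_fun]
  by_cases hx : x = 0
  · simp [hx, chi_zero]
  · have hne1 : chi n x ≠ 1 := fun h => hx ((chi_eq_one_iff n x).mp h)
    have hpow : chi n x ^ n = 1 := by
      rw [chi, ← pow_mul, mul_comm, pow_mul, zeta_pow_n, one_pow]
    rw [if_neg hx, geom_sum_eq hne1, hpow]
    simp


noncomputable def F : Matrix (ZMod n) (ZMod n) ℂ := fun j k => chi n (j * k)
noncomputable def Finv : Matrix (ZMod n) (ZMod n) ℂ := fun j k => chi n (-(j * k)) / n

lemma hn0 : (n : ℂ) ≠ 0 := Nat.cast_ne_zero.mpr (NeZero.ne n)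

lemma F_mul_Finv : F n * Finv n = 1 := by
  ext j l
  rw [Matrix.mul_apply]
  simp only [F, Finv]
  have : ∀ k : ZMod n, chi n (j * k) * (chi n (-(k * l)) / n)
      = chi n ((j - l) * k) / n := by
    intro k
    rw [mul_div_assoc', ← chi_add, show j * k + -(k * l) = (j - l) * k by ring]
  simp_rw [this, ← Finset.sum_div, sum_chi]
  by_cases h : j = l
  · simp [h, Matrix.one_apply, div_self (hn0 n)]
  · simp [sub_eq_zero, h, Matrix.one_apply]

lemma isUnit_F : IsUnit (F n) := by
  rw [Matrix.isUnit_iff_isUnit_det]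
  exact Matrix.isUnit_det_of_right_inverse (F_mul_Finv n)

lemma F_inv : (F n)⁻¹ = Finv n := Matrix.inv_eq_right_inv (F_mul_Finv n)


lemma chi_mul_eq (e k : ZMod n) :
    chi n (e * k) = Complex.exp (((2 * Real.pi * k.val * e.val / n : ℝ)) * Complex.I) := by
  rw [chi, ZMod.val_mul, zeta_pow_mod, zeta, ← Complex.exp_nat_mul]
  congr 1
  have hn : (n : ℂ) ≠ 0 := hn0 n
  push_cast
  field_simp

lemma sin_sum_zero (a : ZMod n → Prop) [DecidablePred a]
    (ha0 : ¬ a 0) (hsymm : ∀ k : ZMod n, a (-k) ↔ a k) (k : ZMod n) :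
    ∑ e : ZMod n, (if a e then (1:ℝ) else 0) * Real.sin (2 * Real.pi * k.val * e.val / n) = 0 := by
  set f : ZMod n → ℝ := fun e => (if a e then (1:ℝ) else 0) * Real.sin (2 * Real.pi * k.val * e.val / n) with hf
  have hneg : ∀ e : ZMod n, f (-e) = - f e := by
    intro e
    by_cases he : e = 0
    · subst he
      simp [hf, if_neg ha0]
    · have hval : (-e).val = n - e.val := by
        rw [ZMod.neg_val, if_neg he]
      have hvlt : e.val < n := ZMod.val_lt e
      have hvpos : 0 < e.val := by
        rcases Nat.eq_zero_or_pos e.val with h | h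
        · exact absurd ((ZMod.val_eq_zero e).mp h) he
        · exact h
      have hsin : Real.sin (2 * Real.pi * k.val * (-e).val / n)
          = - Real.sin (2 * Real.pi * k.val * e.val / n) := by
        rw [hval]
        have hnn : (n:ℝ) ≠ 0 := Nat.cast_ne_zero.mpr (NeZero.ne n)
        have : (2 * Real.pi * k.val * (n - e.val : ℕ) / n : ℝ)
            = 2 * Real.pi * k.val - 2 * Real.pi * k.val * e.val / n := by
          rw [Nat.cast_sub hvlt.le]
          field_simp
        rw [this, Real.sin_sub]
        have h1 : Real.sin (2 * Real.pi * k.val) = 0 := by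
          have := Real.sin_int_mul_pi (2 * (k.val : ℤ))
          push_cast at this ⊢
          rw [show 2 * Real.pi * (k.val:ℝ) = 2 * (k.val:ℝ) * Real.pi by ring, this]
        have h2 : Real.cos (2 * Real.pi * k.val) = 1 := by
          have := Real.cos_int_mul_two_pi (k.val : ℤ)
          push_cast at this ⊢
          rw [show 2 * Real.pi * (k.val:ℝ) = (k.val:ℝ) * (2 * Real.pi) by ring, this]
        rw [h1, h2]
        ring
      simp only [hf, hsymm e, hsin]
      ring
  have hsum : ∑ e : ZMod n, f (-e) = ∑ e : ZMod n, f e :=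
    Fintype.sum_equiv (Equiv.neg (ZMod n)) _ _ (fun e => rfl)
  have : ∑ e : ZMod n, f e = - ∑ e : ZMod n, f e := by
    conv_lhs => rw [← hsum]
    simp_rw [hneg]
    rw [Finset.sum_neg_distrib]
  linarith

lemma core (a : ZMod n → Prop) [DecidablePred a]
    (ha0 : ¬ a 0) (hsymm : ∀ k : ZMod n, a (-k) ↔ a k)
    (lam : ZMod n → ℝ)
    (hlam' : ∀ k : ZMod n, lam k
      = ∑ d : ZMod n, (if a d then (1:ℝ) else 0) * Real.cos (2 * Real.pi * k.val * d.val / n))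
    (k : ZMod n) :
    ∑ e : ZMod n, (if a e then (1:ℂ) else 0) * chi n (e * k) = (lam k : ℂ) := by
  have key : ∀ e : ZMod n, (if a e then (1:ℂ) else 0) * chi n (e * k)
      = (((if a e then (1:ℝ) else 0) * Real.cos (2 * Real.pi * k.val * e.val / n) : ℝ) : ℂ)
        + (((if a e then (1:ℝ) else 0) * Real.sin (2 * Real.pi * k.val * e.val / n) : ℝ) : ℂ) * Complex.I := by
    intro e
    rw [chi_mul_eq, Complex.exp_mul_I]
    split_ifs <;> push_cast <;> ring
  simp_rw [key]
  rw [Finset.sum_add_distrib, ← Finset.sum_mul, ← Complex.ofReal_sum, ← Complex.ofReal_sum,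
    sin_sum_zero n a ha0 hsymm k, hlam' k]
  simp

lemma eigen (a : ZMod n → Prop) [DecidablePred a]
    (ha0 : ¬ a 0) (hsymm : ∀ k : ZMod n, a (-k) ↔ a k)
    (A : Matrix (ZMod n) (ZMod n) ℝ)
    (hA : ∀ j k : ZMod n, A j k = if a (k - j) then 1 else 0)
    (lam : ZMod n → ℝ)
    (hlam' : ∀ k : ZMod n, lam k
      = ∑ d : ZMod n, (if a d then (1:ℝ) else 0) * Real.cos (2 * Real.pi * k.val * d.val / n)) :
    (A.map Complex.ofReal) * F n = F n * Matrix.diagonal (fun k => (lam k : ℂ)) := by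
  ext j k
  rw [Matrix.mul_apply, Matrix.mul_diagonal]
  have : ∀ d : ZMod n, (A.map Complex.ofReal) j d * F n d k
      = (if a (d - j) then (1:ℂ) else 0) * chi n ((d - j) * k) * chi n (j * k) := by
    intro d
    rw [Matrix.map_apply, hA, F]
    by_cases h : a (d - j)
    · rw [if_pos h, if_pos h, one_mul, Complex.ofReal_one, one_mul, ← chi_add,
        show (d - j) * k + j * k = d * k by ring]
    · rw [if_neg h, if_neg h]; simp
  simp_rw [this, ← Finset.sum_mul]
  have : ∑ d : ZMod n, (if a (d - j) then (1:ℂ) else 0) * chi n ((d - j) * k)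
      = ∑ e : ZMod n, (if a e then (1:ℂ) else 0) * chi n (e * k) := by
    apply Fintype.sum_equiv (Equiv.subRight j)
    intro d
    rfl
  rw [this, core n a ha0 hsymm lam hlam' k, F, mul_comm]

lemma exp_entry (a : ZMod n → Prop) [DecidablePred a]
    (ha0 : ¬ a 0) (hsymm : ∀ k : ZMod n, a (-k) ↔ a k)
    (A : Matrix (ZMod n) (ZMod n) ℝ)
    (hA : ∀ j k : ZMod n, A j k = if a (k - j) then 1 else 0)
    (lam : ZMod n → ℝ)
    (hlam' : ∀ k : ZMod n, lam k
      = ∑ d : ZMod n, (if a d then (1:ℝ) else 0) * Real.cos (2 * Real.pi * k.val * d.val / n))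
    (t : ℝ) (j : ZMod n) :
    (NormedSpace.exp ((-Complex.I * (t : ℂ)) • (A.map Complex.ofReal))) j 0
      = (1 / n) * ∑ k : ZMod n, chi n (j * k) * Complex.exp (-Complex.I * t * lam k) := by
  have hM : (A.map Complex.ofReal)
      = F n * Matrix.diagonal (fun k => (lam k : ℂ)) * (F n)⁻¹ := by
    have h1 := eigen n a ha0 hsymm A hA lam hlam'
    calc (A.map Complex.ofReal) = (A.map Complex.ofReal) * (F n * Finv n) := by
          rw [F_mul_Finv, mul_one]
      _ = ((A.map Complex.ofReal) * F n) * Finv n := by rw [mul_assoc]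
      _ = F n * Matrix.diagonal (fun k => (lam k : ℂ)) * (F n)⁻¹ := by rw [h1, F_inv]
  have hsmul : (-Complex.I * (t : ℂ)) • (A.map Complex.ofReal)
      = F n * Matrix.diagonal (fun k => -Complex.I * t * lam k) * (F n)⁻¹ := by
    rw [hM, ← Matrix.smul_mul, ← Matrix.mul_smul]
    congr 2
    ext i i'
    by_cases h : i = i' <;> simp [Matrix.smul_apply, Matrix.diagonal_apply, h]
  rw [hsmul, Matrix.exp_conj (F n) _ (isUnit_F n), Matrix.exp_diagonal, F_inv]
  rw [Matrix.mul_apply]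
  rw [Finset.mul_sum]
  congr 1
  ext k
  rw [Matrix.mul_diagonal]
  simp only [Finv, F]
  rw [mul_zero, neg_zero, chi_zero]
  rw [Pi.coe_exp, ← Complex.exp_eq_exp_ℂ]
  ring


lemma avg_cos (μ : ℝ) :
    Tendsto (fun T : ℝ => (1/T) * ∫ t in (0:ℝ)..T, Real.cos (t*μ)) atTop
      (nhds (if μ = 0 then 1 else 0)) := by
  by_cases hμ : μ = 0
  · subst hμ
    rw [if_pos rfl]
    have h : ∀ᶠ T : ℝ in atTop, (1/T) * ∫ t in (0:ℝ)..T, Real.cos (t*0) = 1 := by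
      filter_upwards [eventually_gt_atTop (0:ℝ)] with T hT
      simp [mul_zero, Real.cos_zero, intervalIntegral.integral_const, one_div,
        inv_mul_cancel₀ hT.ne']
    exact Tendsto.congr' (by filter_upwards [h] with T hT; exact hT.symm) tendsto_const_nhds
  · rw [if_neg hμ]
    have hint : ∀ T : ℝ, ∫ t in (0:ℝ)..T, Real.cos (t*μ) = μ⁻¹ * (Real.sin (T*μ)) := by
      intro T
      rw [intervalIntegral.integral_comp_mul_right Real.cos hμ]
      simp [integral_cos]
    apply squeeze_zero_norm' (a := fun T : ℝ => |μ|⁻¹ * T⁻¹)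
    · filter_upwards [eventually_gt_atTop (0:ℝ)] with T hT
      rw [hint]
      rw [Real.norm_eq_abs, abs_mul, abs_mul, abs_inv]
      rw [abs_of_pos (by positivity : (0:ℝ) < 1/T), one_div]
      calc T⁻¹ * (|μ|⁻¹ * |Real.sin (T*μ)|) ≤ T⁻¹ * (|μ|⁻¹ * 1) := by
            apply mul_le_mul_of_nonneg_left _ (by positivity)
            exact mul_le_mul_of_nonneg_left (Real.abs_sin_le_one _) (by positivity)
        _ = |μ|⁻¹ * T⁻¹ := by ring
    · simpa using (tendsto_inv_atTop_zero).const_mul (|μ|⁻¹)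

lemma avg_sin (μ : ℝ) :
    Tendsto (fun T : ℝ => (1/T) * ∫ t in (0:ℝ)..T, Real.sin (t*μ)) atTop (nhds 0) := by
  by_cases hμ : μ = 0
  · subst hμ
    simp [mul_zero]
  · have hint : ∀ T : ℝ, ∫ t in (0:ℝ)..T, Real.sin (t*μ) = μ⁻¹ * (1 - Real.cos (T*μ)) := by
      intro T
      rw [intervalIntegral.integral_comp_mul_right Real.sin hμ]
      simp [integral_sin]
    apply squeeze_zero_norm' (a := fun T : ℝ => (|μ|⁻¹ * 2) * T⁻¹)
    · filter_upwards [eventually_gt_atTop (0:ℝ)] with T hT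
      rw [hint]
      rw [Real.norm_eq_abs, abs_mul, abs_mul, abs_inv]
      rw [abs_of_pos (by positivity : (0:ℝ) < 1/T), one_div]
      have h2 : |1 - Real.cos (T*μ)| ≤ 2 := by
        have := Real.neg_one_le_cos (T*μ)
        have := Real.cos_le_one (T*μ)
        rw [abs_le]; constructor <;> linarith
      calc T⁻¹ * (|μ|⁻¹ * |1 - Real.cos (T*μ)|) ≤ T⁻¹ * (|μ|⁻¹ * 2) := by
            apply mul_le_mul_of_nonneg_left _ (by positivity)
            exact mul_le_mul_of_nonneg_left h2 (by positivity)
        _ = (|μ|⁻¹ * 2) * T⁻¹ := by ring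
    · simpa using (tendsto_inv_atTop_zero).const_mul (|μ|⁻¹ * 2)

lemma avg_pair (μ u v : ℝ) :
    Tendsto (fun T : ℝ => (1/T) * ∫ t in (0:ℝ)..T,
        (Real.cos (t*μ) * u + Real.sin (t*μ) * v)) atTop
      (nhds ((if μ = 0 then 1 else 0) * u)) := by
  have hc : ∀ T : ℝ, ∫ t in (0:ℝ)..T, (Real.cos (t*μ) * u + Real.sin (t*μ) * v)
      = (∫ t in (0:ℝ)..T, Real.cos (t*μ)) * u + (∫ t in (0:ℝ)..T, Real.sin (t*μ)) * v := by
    intro T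
    rw [intervalIntegral.integral_add, intervalIntegral.integral_mul_const,
      intervalIntegral.integral_mul_const]
    · exact ((Real.continuous_cos.comp (continuous_id.mul continuous_const)).mul continuous_const).intervalIntegrable _ _
    · exact ((Real.continuous_sin.comp (continuous_id.mul continuous_const)).mul continuous_const).intervalIntegrable _ _
  simp_rw [hc, mul_add]
  have : ((if μ = 0 then 1 else 0) * u : ℝ) = (if μ = 0 then 1 else 0) * u + 0 * v := by ring
  rw [this]
  apply Tendsto.add
  · have := (avg_cos μ).mul_const u
    simpa [mul_assoc, mul_comm, mul_left_comm] using this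
  · have := (avg_sin μ).mul_const v
    simpa [mul_assoc, mul_comm, mul_left_comm] using this

lemma term_re (w : ℂ) (x : ℝ) :
    (w * Complex.exp (-Complex.I * x)).re = Real.cos x * w.re + Real.sin x * w.im := by
  rw [show -Complex.I * (x:ℂ) = ((-x : ℝ) : ℂ) * Complex.I by push_cast; ring,
    Complex.exp_mul_I, ← Complex.ofReal_cos, ← Complex.ofReal_sin]
  simp [Complex.mul_re, Complex.add_re, Complex.mul_im, Real.cos_neg, Real.sin_neg,
    Complex.cos_ofReal_re, Complex.sin_ofReal_re]
  ring


end CircAux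
namespace CircAux
variable (n : ℕ) [NeZero n]

lemma integrand_eq (a : ZMod n → Prop) [DecidablePred a]
    (ha0 : ¬ a 0) (hsymm : ∀ k : ZMod n, a (-k) ↔ a k)
    (A : Matrix (ZMod n) (ZMod n) ℝ)
    (hA : ∀ j k : ZMod n, A j k = if a (k - j) then 1 else 0)
    (lam : ZMod n → ℝ)
    (hlam' : ∀ k : ZMod n, lam k
      = ∑ d : ZMod n, (if a d then (1:ℝ) else 0) * Real.cos (2 * Real.pi * k.val * d.val / n))
    (j : ZMod n) (t : ℝ) :
    ‖(NormedSpace.exp ((-Complex.I * (t : ℂ)) • (A.map Complex.ofReal))) j 0‖ ^ 2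
      = (1/(n:ℝ))^2 * ∑ q ∈ Finset.univ ×ˢ Finset.univ,
          (Real.cos (t * (lam q.1 - lam q.2)) * (chi n (j * (q.1 - q.2))).re
           + Real.sin (t * (lam q.1 - lam q.2)) * (chi n (j * (q.1 - q.2))).im) := by
  rw [exp_entry n a ha0 hsymm A hA lam hlam' t j]
  set S : ℂ := ∑ k : ZMod n, chi n (j * k) * Complex.exp (-Complex.I * t * lam k) with hS
  have hprod : ((1/(n:ℂ)) * S) * (starRingEnd ℂ) ((1/(n:ℂ)) * S)
      = (((1/(n:ℝ))^2 : ℝ) : ℂ) * ∑ q ∈ Finset.univ ×ˢ Finset.univ,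
          (chi n (j * (q.1 - q.2)) * Complex.exp (-Complex.I * ((t * (lam q.1 - lam q.2) : ℝ) : ℂ))) := by
    rw [_root_.map_mul]
    have hconjn : (starRingEnd ℂ) (1/(n:ℂ)) = 1/(n:ℂ) := by
      simp
    rw [hconjn]
    have hconjS : (starRingEnd ℂ) S = ∑ l : ZMod n, chi n (-(j * l)) * Complex.exp (Complex.I * t * lam l) := by
      rw [hS, map_sum]
      congr 1
      ext l
      rw [_root_.map_mul, conj_chi]
      congr 1
      rw [← Complex.exp_conj]
      congr 1
      simp [_root_.map_mul, Complex.conj_I]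
    have hSS : S * (starRingEnd ℂ) S = ∑ q ∈ Finset.univ ×ˢ Finset.univ,
        (chi n (j * (q.1 - q.2)) * Complex.exp (-Complex.I * ((t * (lam q.1 - lam q.2) : ℝ) : ℂ))) := by
      rw [hS, hconjS, Finset.sum_mul_sum, Finset.sum_product]
      congr 1; ext k; congr 1; ext l
      rw [show chi n (j * k) * Complex.exp (-Complex.I * t * lam k) *
            (chi n (-(j * l)) * Complex.exp (Complex.I * t * lam l))
          = (chi n (j * k) * chi n (-(j * l))) *
            (Complex.exp (-Complex.I * t * lam k) * Complex.exp (Complex.I * t * lam l)) by ring]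
      rw [← chi_add, ← Complex.exp_add]
      congr 1
      · congr 1; ring
      · congr 1; push_cast; ring
    rw [mul_mul_mul_comm, hSS]
    congr 1
    push_cast
    ring
  rw [Complex.sq_norm]
  have hre : Complex.normSq ((1/(n:ℂ)) * S) = (((1/(n:ℂ)) * S) * (starRingEnd ℂ) ((1/(n:ℂ)) * S)).re := by
    rw [Complex.mul_conj, Complex.ofReal_re]
  rw [hre, hprod, Complex.re_ofReal_mul, Complex.re_sum]
  congr 1
  exact Finset.sum_congr rfl fun q _ => term_re _ _

end CircAux
/-- The average (limiting) probability of a continuous-time quantum walk on a graph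
with adjacency matrix `A`, starting at vertex `s`, of being at vertex `j`. -/
noncomputable def avgProb {V : Type*} [Fintype V] [DecidableEq V]
    (A : Matrix V V ℂ) (s j : V) (p : ℝ) : Prop :=
  Tendsto (fun T : ℝ =>
      (1 / T) * ∫ t in (0:ℝ)..T,
        ‖(NormedSpace.exp ((-Complex.I * (t : ℂ)) • A)) j s‖ ^ 2)
    atTop (nhds p)

/-- A circulant graph whose maximum eigenvalue multiplicity is bounded by a
constant `c` is average uniform mixing: `|p̄_j − 1/n| ≤ c(c−1)/(2n)` for every vertex `j`. -/
theorem circulant_bounded_multiplicity_uniform_mixing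
    (n : ℕ) [NeZero n] (c : ℕ)
    (a : ZMod n → Prop) [DecidablePred a]
    (ha0 : ¬ a 0) (hsymm : ∀ k : ZMod n, a (-k) ↔ a k)
    (A : Matrix (ZMod n) (ZMod n) ℝ)
    (hA : ∀ j k : ZMod n, A j k = if a (k - j) then 1 else 0)
    (lam : ZMod n → ℝ)
    (hlam : ∀ k : ZMod n,
      lam k = ∑ d : ZMod n, A 0 d * Real.cos (2 * Real.pi * k.val * d.val / n))
    (hmult : ∀ x : ℝ, (Finset.univ.filter (fun k : ZMod n => lam k = x)).card ≤ c) :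
    ∀ j : ZMod n, ∃ p : ℝ,
      avgProb (A.map Complex.ofReal) 0 j p ∧
      |p - 1 / n| ≤ (c : ℝ) * ((c : ℝ) - 1) / (2 * n) := by
  intro j
  have hnR : (n:ℝ) ≠ 0 := Nat.cast_ne_zero.mpr (NeZero.ne n)
  have hlam' : ∀ k : ZMod n, lam k
      = ∑ d : ZMod n, (if a d then (1:ℝ) else 0) * Real.cos (2 * Real.pi * k.val * d.val / n) := by
    intro k
    rw [hlam k]
    exact Finset.sum_congr rfl fun d _ => by rw [hA 0 d, sub_zero]
  set Q : Finset (ZMod n × ZMod n) := Finset.univ ×ˢ Finset.univ with hQ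
  set μ : ZMod n × ZMod n → ℝ := fun q => lam q.1 - lam q.2 with hμ
  set w : ZMod n × ZMod n → ℂ := fun q => CircAux.chi n (j * (q.1 - q.2)) with hw
  refine ⟨(1/(n:ℝ))^2 * ∑ q ∈ Q, ((if μ q = 0 then (1:ℝ) else 0) * (w q).re), ?_, ?_⟩
  · -- the tendsto part
    unfold avgProb
    have key : ∀ T : ℝ, (1 / T) * ∫ t in (0:ℝ)..T,
          ‖(NormedSpace.exp ((-Complex.I * (t : ℂ)) • (A.map Complex.ofReal))) j 0‖ ^ 2
        = (1/(n:ℝ))^2 * ∑ q ∈ Q, ((1/T) * ∫ t in (0:ℝ)..T,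
            (Real.cos (t * μ q) * (w q).re + Real.sin (t * μ q) * (w q).im)) := by
      intro T
      have h1 : (∫ t in (0:ℝ)..T,
          ‖(NormedSpace.exp ((-Complex.I * (t : ℂ)) • (A.map Complex.ofReal))) j 0‖ ^ 2)
          = ∫ t in (0:ℝ)..T, (1/(n:ℝ))^2 * ∑ q ∈ Q,
              (Real.cos (t * μ q) * (w q).re + Real.sin (t * μ q) * (w q).im) := by
        refine intervalIntegral.integral_congr fun t _ => ?_
        exact CircAux.integrand_eq n a ha0 hsymm A hA lam hlam' j t
      have hcont : ∀ q : ZMod n × ZMod n, Continuous (fun t : ℝ =>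
          Real.cos (t * μ q) * (w q).re + Real.sin (t * μ q) * (w q).im) := by
        intro q
        exact ((Real.continuous_cos.comp (continuous_id.mul continuous_const)).mul
          continuous_const).add ((Real.continuous_sin.comp
            (continuous_id.mul continuous_const)).mul continuous_const)
      rw [h1, intervalIntegral.integral_const_mul,
        intervalIntegral.integral_finset_sum (fun q _ => (hcont q).intervalIntegrable 0 T)]
      rw [mul_left_comm, Finset.mul_sum]
    have hlim := (tendsto_finset_sum Q
      (fun q _ => CircAux.avg_pair (μ q) (w q).re (w q).im)).const_mul ((1/(n:ℝ))^2)
    exact hlim.congr fun T => (key T).symm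
  · -- the bound
    have hc1 : 1 ≤ c := by
      have h0 : (0 : ZMod n) ∈ Finset.univ.filter (fun k : ZMod n => lam k = lam 0) := by
        simp
      have := Finset.card_pos.mpr ⟨0, h0⟩
      exact le_trans this (hmult (lam 0))
    set R : ZMod n → ℝ := fun k => ∑ l ∈ Finset.univ \ {k},
        (if μ (k, l) = 0 then (1:ℝ) else 0) * (w (k, l)).re with hR
    have hsplit : ∑ q ∈ Q, ((if μ q = 0 then (1:ℝ) else 0) * (w q).re)
        = (∑ k : ZMod n, R k) + n := by
      rw [hQ, Finset.sum_product]
      have : ∀ k : ZMod n, ∑ l : ZMod n, ((if μ (k, l) = 0 then (1:ℝ) else 0) * (w (k, l)).re)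
          = R k + 1 := by
        intro k
        rw [Finset.sum_eq_sum_sdiff_singleton_add (Finset.mem_univ k)]
        simp only [hR]
        congr 1
        simp [hμ, hw, CircAux.chi_zero]
      simp_rw [this]
      rw [Finset.sum_add_distrib]
      simp [Finset.card_univ, ZMod.card]
    have hRk : ∀ k : ZMod n, |R k| ≤ (c:ℝ) - 1 := by
      intro k
      have h1 : |R k| ≤ ∑ l ∈ Finset.univ \ {k},
          (if μ (k, l) = 0 then (1:ℝ) else 0) := by
        refine le_trans (Finset.abs_sum_le_sum_abs _ _) (Finset.sum_le_sum fun l _ => ?_)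
        by_cases h : μ (k, l) = 0
        · rw [if_pos h, one_mul]
          calc |(w (k, l)).re| ≤ ‖w (k, l)‖ := Complex.abs_re_le_norm _
            _ = 1 := CircAux.abs_chi n _
        · simp [h]
      have h2 : ∑ l ∈ Finset.univ \ {k}, (if μ (k, l) = 0 then (1:ℝ) else 0)
          = ((Finset.univ \ {k}).filter (fun l => μ (k, l) = 0)).card := by
        rw [Finset.sum_boole]
      have h3 : ((Finset.univ \ {k}).filter (fun l => μ (k, l) = 0)).card
          ≤ c - 1 := by
        have hsub : ((Finset.univ \ {k}).filter (fun l => μ (k, l) = 0))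
            ⊆ (Finset.univ.filter (fun l : ZMod n => lam l = lam k)).erase k := by
          intro l hl
          rw [Finset.mem_filter, Finset.mem_sdiff, Finset.mem_singleton] at hl
          rw [Finset.mem_erase, Finset.mem_filter]
          refine ⟨hl.1.2, Finset.mem_univ _, ?_⟩
          have := hl.2
          rw [hμ] at this
          simp only at this
          linarith [this]
        refine le_trans (Finset.card_le_card hsub) ?_
        rw [Finset.card_erase_of_mem]
        · exact Nat.sub_le_sub_right (hmult (lam k)) 1
        · simp
      have h4 : (((Finset.univ \ {k}).filter (fun l => μ (k, l) = 0)).card : ℝ)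
          ≤ (c:ℝ) - 1 := by
        have := Nat.cast_le (α := ℝ) |>.mpr h3
        rwa [Nat.cast_sub hc1, Nat.cast_one] at this
      calc |R k| ≤ _ := h1
        _ = _ := h2
        _ ≤ (c:ℝ) - 1 := h4
    have hdiff : (1/(n:ℝ))^2 * ∑ q ∈ Q, ((if μ q = 0 then (1:ℝ) else 0) * (w q).re) - 1/n
        = (1/(n:ℝ))^2 * ∑ k : ZMod n, R k := by
      rw [hsplit, mul_add]
      have : (1/(n:ℝ))^2 * n = 1/n := by field_simp
      rw [this]
      ring
    rw [hdiff]
    have hsum : |∑ k : ZMod n, R k| ≤ (n:ℝ) * ((c:ℝ) - 1) := by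
      refine le_trans (Finset.abs_sum_le_sum_abs _ _) ?_
      calc ∑ k : ZMod n, |R k| ≤ ∑ _k : ZMod n, ((c:ℝ) - 1) :=
            Finset.sum_le_sum fun k _ => hRk k
        _ = (n:ℝ) * ((c:ℝ) - 1) := by
            rw [Finset.sum_const, Finset.card_univ, ZMod.card, nsmul_eq_mul]
    have hfinal : |(1/(n:ℝ))^2 * ∑ k : ZMod n, R k| ≤ ((c:ℝ) - 1) / n := by
      rw [abs_mul, _root_.abs_of_nonneg (by positivity : (0:ℝ) ≤ (1/(n:ℝ))^2)]
      calc (1/(n:ℝ))^2 * |∑ k : ZMod n, R k| ≤ (1/(n:ℝ))^2 * ((n:ℝ) * ((c:ℝ) - 1)) :=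
            mul_le_mul_of_nonneg_left hsum (by positivity)
        _ = ((c:ℝ) - 1) / n := by field_simp
    refine le_trans hfinal ?_
    rcases Nat.lt_or_ge c 2 with hc | hc
    · have hcc : c = 1 := by omega
      subst hcc
      norm_num
    · have hc2 : (2:ℝ) ≤ (c:ℝ) := by exact_mod_cast hc
      have hnpos : (0:ℝ) < n := by
        have := Nat.pos_of_ne_zero (NeZero.ne n)
        exact_mod_cast this
      rw [div_le_div_iff₀ hnpos (by positivity)]
      nlinarith [mul_nonneg (mul_nonneg (sub_nonneg.mpr hc2)
        (by linarith : (0:ℝ) ≤ (c:ℝ) - 1)) hnpos.le]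
end

section
/- For the continuous-time quantum walk on the cone K_1 + C over an ℓ-regular circulant C of order n, starting at the apex vertex, the average probability of the apex is p̄_0 = 1 − (1/2)·n/(n + (ℓ/2)²). In particular p̄_0 ≥ 1/2, so the cone of any circulant is never average uniform mixing (for n → ∞). -/
open Matrix Complex Filter Real

section Aux

attribute [local instance] Matrix.linftyOpNormedRing Matrix.linftyOpNormedAlgebra

theorem exp_mulVec_eigenvector {m : Type*} [Fintype m] [DecidableEq m]
    (M : Matrix m m ℂ) (v : m → ℂ) (μ : ℂ) (h : M *ᵥ v = μ • v) :
    NormedSpace.exp M *ᵥ v = Complex.exp μ • v := by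
  have hpow : ∀ k : ℕ, (M ^ k) *ᵥ v = μ ^ k • v := by
    intro k
    induction k with
    | zero => simp
    | succ k ih =>
      rw [pow_succ, pow_succ, ← Matrix.mulVec_mulVec, h, Matrix.mulVec_smul, ih,
        smul_smul, mul_comm (μ ^ k) μ]
  let L : Matrix m m ℂ →L[ℂ] (m → ℂ) :=
    LinearMap.toContinuousLinearMap
      { toFun := fun N => N *ᵥ v
        map_add' := fun N₁ N₂ => Matrix.add_mulVec N₁ N₂ v
        map_smul' := fun c N => Matrix.smul_mulVec c N v }
  have hL : ∀ N : Matrix m m ℂ, L N = N *ᵥ v := fun _ => rfl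
  rw [NormedSpace.exp_eq_tsum (𝕂 := ℂ), ← hL,
    L.map_tsum (NormedSpace.expSeries_summable' (𝕂 := ℂ) M)]
  have key : ∀ k : ℕ, L ((k.factorial : ℂ)⁻¹ • M ^ k) = ((k.factorial : ℂ)⁻¹ * μ ^ k) • v := by
    intro k
    rw [_root_.map_smul, hL, hpow, smul_smul]
  simp_rw [key]
  rw [Summable.tsum_smul_const ?_]
  · congr 1
    rw [Complex.exp_eq_exp_ℂ, NormedSpace.exp_eq_tsum (𝕂 := ℂ)]
    simp_rw [smul_eq_mul]
  · have := NormedSpace.expSeries_summable' (𝕂 := ℂ) μ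
    simpa [smul_eq_mul] using this

theorem abs_sq_exp_comb (r s a b : ℝ) :
    ‖(r:ℂ) * Complex.exp ((a:ℂ)*Complex.I) - (s:ℂ) * Complex.exp ((b:ℂ)*Complex.I)‖ ^ 2
      = r^2 + s^2 - 2*r*s*Real.cos (a-b) := by
  rw [Complex.sq_norm, Complex.normSq_apply]
  simp [Complex.exp_mul_I, Complex.cos_ofReal_re, Complex.sin_ofReal_re]
  rw [Real.cos_sub]
  nlinarith [Real.sin_sq_add_cos_sq a, Real.sin_sq_add_cos_sq b]

end Aux

set_option maxHeartbeats 1000000 in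
/-- For the quantum walk on the cone `K_1 + C` over an `ℓ`-regular
circulant `C` of order `n`, started at the apex, the average probability of the apex is
`p̄_0 = 1 − (1/2)·n/(n + (ℓ/2)²) ≥ 1/2`, so the cone is never average uniform mixing. -/
theorem cone_not_uniform_mixing (n : ℕ) [NeZero n] (ℓ : ℕ)
    (c : ZMod n → Prop) [DecidablePred c]
    (hc0 : ¬ c 0) (hcsymm : ∀ k : ZMod n, c (-k) ↔ c k)
    (AC : Matrix (ZMod n) (ZMod n) ℂ)
    (hAC : ∀ j k : ZMod n, AC j k = if c (k - j) then 1 else 0)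
    (hreg : ∀ j : ZMod n, ∑ k : ZMod n, AC j k = (ℓ : ℂ))
    (A : Matrix (Unit ⊕ ZMod n) (Unit ⊕ ZMod n) ℂ)
    (hapex : A (Sum.inl ()) (Sum.inl ()) = 0)
    (hcross1 : ∀ y : ZMod n, A (Sum.inl ()) (Sum.inr y) = 1)
    (hcross2 : ∀ y : ZMod n, A (Sum.inr y) (Sum.inl ()) = 1)
    (hC : ∀ x y : ZMod n, A (Sum.inr x) (Sum.inr y) = AC x y) :
    avgProb A (Sum.inl ()) (Sum.inl ())
        (1 - (1 / 2) * ((n : ℝ) / ((n : ℝ) + ((ℓ : ℝ) / 2) ^ 2))) ∧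
    (1 : ℝ) / 2 ≤ 1 - (1 / 2) * ((n : ℝ) / ((n : ℝ) + ((ℓ : ℝ) / 2) ^ 2)) := by
  have hn1 : (1:ℝ) ≤ (n:ℝ) := by exact_mod_cast Nat.one_le_iff_ne_zero.2 (NeZero.ne n)
  have hnpos : (0:ℝ) < (n:ℝ) := by linarith
  set D : ℝ := Real.sqrt ((ℓ:ℝ)^2 + 4*(n:ℝ)) with hD
  have hD2 : D^2 = (ℓ:ℝ)^2 + 4*(n:ℝ) := Real.sq_sqrt (by positivity)
  have hDpos : 0 < D := Real.sqrt_pos.2 (by positivity)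
  set lp : ℝ := ((ℓ:ℝ) + D)/2 with hlp
  set lm : ℝ := ((ℓ:ℝ) - D)/2 with hlm
  set xp : ℝ := (-(ℓ:ℝ) + D)/2 with hxp
  set xm : ℝ := (-(ℓ:ℝ) - D)/2 with hxm
  -- eigenvectors
  set vp : Unit ⊕ ZMod n → ℂ := Sum.elim (fun _ => (xp : ℂ)) (fun _ => 1) with hvp
  set vm : Unit ⊕ ZMod n → ℂ := Sum.elim (fun _ => (xm : ℂ)) (fun _ => 1) with hvm
  have heigp : A *ᵥ vp = ((lp : ℝ) : ℂ) • vp := by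
    funext z
    cases z with
    | inl u =>
      cases u
      have h1 : lp * xp = (n:ℝ) := by
        rw [hlp, hxp]; nlinarith [hD2]
      have h1' : ((lp : ℝ) : ℂ) * ((xp : ℝ) : ℂ) = (n : ℂ) := by
        rw [← Complex.ofReal_mul, h1]; push_cast; ring
      simp [Matrix.mulVec, dotProduct, Fintype.sum_sum_type, hapex, hcross1, hvp]
      rw [← h1']
    | inr y =>
      have h2 : xp + (ℓ:ℝ) = lp := by rw [hlp, hxp]; ring
      have h2' : ((xp : ℝ) : ℂ) + (ℓ : ℂ) = ((lp : ℝ) : ℂ) := by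
        rw [← Complex.ofReal_natCast, ← Complex.ofReal_add, h2]
      simp [Matrix.mulVec, dotProduct, Fintype.sum_sum_type, hcross2, hC, hvp, hreg]
      rw [← h2']
  have heigm : A *ᵥ vm = ((lm : ℝ) : ℂ) • vm := by
    funext z
    cases z with
    | inl u =>
      cases u
      have h1 : lm * xm = (n:ℝ) := by
        rw [hlm, hxm]; nlinarith [hD2]
      have h1' : ((lm : ℝ) : ℂ) * ((xm : ℝ) : ℂ) = (n : ℂ) := by
        rw [← Complex.ofReal_mul, h1]; push_cast; ring
      simp [Matrix.mulVec, dotProduct, Fintype.sum_sum_type, hapex, hcross1, hvm]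
      rw [← h1']
    | inr y =>
      have h2 : xm + (ℓ:ℝ) = lm := by rw [hlm, hxm]; ring
      have h2' : ((xm : ℝ) : ℂ) + (ℓ : ℂ) = ((lm : ℝ) : ℂ) := by
        rw [← Complex.ofReal_natCast, ← Complex.ofReal_add, h2]
      simp [Matrix.mulVec, dotProduct, Fintype.sum_sum_type, hcross2, hC, hvm, hreg]
      rw [← h2']
  -- decomposition of the apex basis vector
  have hsingle : Pi.single (Sum.inl () : Unit ⊕ ZMod n) (1:ℂ)
      = ((D:ℂ))⁻¹ • (vp - vm) := by
    funext z
    have hDne : ((D:ℂ)) ≠ 0 := by exact_mod_cast hDpos.ne'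
    cases z with
    | inl u =>
      cases u
      simp [hvp, hvm, Pi.single_apply]
      rw [← Complex.ofReal_sub]
      have : xp - xm = D := by rw [hxp, hxm]; ring
      rw [this]
      field_simp
    | inr y =>
      simp [hvp, hvm, Pi.single_apply]
  -- the amplitude formula
  have hamp : ∀ t : ℝ, (NormedSpace.exp ((-Complex.I * (t : ℂ)) • A)) (Sum.inl ()) (Sum.inl ())
      = ((D:ℂ))⁻¹ * ((xp:ℂ) * Complex.exp (((-(t*lp):ℝ):ℂ) * Complex.I)
        - (xm:ℂ) * Complex.exp (((-(t*lm):ℝ):ℂ) * Complex.I)) := by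
    intro t
    set M := (-Complex.I * (t : ℂ)) • A with hM
    have hep : M *ᵥ vp = ((-Complex.I * (t : ℂ)) * ((lp : ℝ) : ℂ)) • vp := by
      rw [hM, Matrix.smul_mulVec, heigp, smul_smul]
    have hem : M *ᵥ vm = ((-Complex.I * (t : ℂ)) * ((lm : ℝ) : ℂ)) • vm := by
      rw [hM, Matrix.smul_mulVec, heigm, smul_smul]
    have hexpp := exp_mulVec_eigenvector M vp _ hep
    have hexpm := exp_mulVec_eigenvector M vm _ hem
    have hentry : (NormedSpace.exp M) (Sum.inl ()) (Sum.inl ())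
        = (NormedSpace.exp M *ᵥ Pi.single (Sum.inl ()) (1:ℂ)) (Sum.inl ()) := by
      simp [Matrix.mulVec, dotProduct, Pi.single_apply]
    rw [hentry, hsingle, Matrix.mulVec_smul, Matrix.mulVec_sub, hexpp, hexpm]
    have h1 : (-Complex.I * (t : ℂ)) * ((lp : ℝ) : ℂ) = ((-(t*lp):ℝ):ℂ) * Complex.I := by
      push_cast; ring
    have h2 : (-Complex.I * (t : ℂ)) * ((lm : ℝ) : ℂ) = ((-(t*lm):ℝ):ℂ) * Complex.I := by
      push_cast; ring
    rw [h1, h2]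
    simp only [Pi.smul_apply, Pi.sub_apply, hvp, hvm, Sum.elim_inl, smul_eq_mul]
    ring
  -- squared modulus
  have habs : ∀ t : ℝ,
      ‖(NormedSpace.exp ((-Complex.I * (t : ℂ)) • A)) (Sum.inl ()) (Sum.inl ())‖ ^ 2
      = ((ℓ:ℝ)^2 + 2*(n:ℝ) + 2*(n:ℝ) * Real.cos (D * t)) / D^2 := by
    intro t
    rw [hamp t, norm_mul, mul_pow, abs_sq_exp_comb]
    have : ‖((D:ℂ))⁻¹‖ = D⁻¹ := by
      rw [norm_inv, Complex.norm_of_nonneg hDpos.le]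
    rw [this]
    have hc : -(t*lp) - -(t*lm) = -(D*t) := by rw [hlp, hlm]; ring
    rw [hc, Real.cos_neg]
    have hx1 : xp^2 + xm^2 = (ℓ:ℝ)^2 + 2*(n:ℝ) := by rw [hxp, hxm]; nlinarith [hD2]
    have hx2 : xp * xm = -(n:ℝ) := by rw [hxp, hxm]; nlinarith [hD2]
    have hkey : xp^2 + xm^2 - 2*xp*xm*Real.cos (D*t)
        = (ℓ:ℝ)^2 + 2*(n:ℝ) + 2*(n:ℝ)*Real.cos (D*t) := by
      linear_combination hx1 - (2*Real.cos (D*t)) * hx2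
    rw [hkey]
    have hD0 : D ≠ 0 := hDpos.ne'
    field_simp
  constructor
  · unfold avgProb
    have hD0 : D ≠ 0 := hDpos.ne'
    have hcosint : ∀ T : ℝ, (∫ t in (0:ℝ)..T, Real.cos (D * t)) = Real.sin (D*T) / D := by
      intro T
      have hderiv : ∀ x ∈ Set.uIcc (0:ℝ) T,
          HasDerivAt (fun x : ℝ => Real.sin (D*x)/D) (Real.cos (D*x)) x := by
        intro x _
        have h1 : HasDerivAt (fun x : ℝ => D * x) D x := by
          simpa using (hasDerivAt_id x).const_mul D
        have h2 := (Real.hasDerivAt_sin (D*x)).comp x h1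
        have h3 := h2.div_const D
        simpa [mul_div_cancel_right₀ _ hD0] using h3
      rw [intervalIntegral.integral_eq_sub_of_hasDerivAt hderiv
        ((Real.continuous_cos.comp (continuous_const.mul continuous_id)).intervalIntegrable 0 T)]
      simp
    have hint : ∀ T : ℝ, (∫ t in (0:ℝ)..T,
        ‖(NormedSpace.exp ((-Complex.I * (t : ℂ)) • A)) (Sum.inl ()) (Sum.inl ())‖ ^ 2)
        = ((ℓ:ℝ)^2 + 2*(n:ℝ))/D^2 * T + (2*(n:ℝ)/D^3) * Real.sin (D*T) := by
      intro T
      have hco : ∀ t : ℝ, ((ℓ:ℝ)^2 + 2*(n:ℝ) + 2*(n:ℝ) * Real.cos (D * t)) / D^2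
          = ((ℓ:ℝ)^2 + 2*(n:ℝ))/D^2 + (2*(n:ℝ)/D^2) * Real.cos (D * t) := by
        intro t; ring
      simp_rw [habs, hco]
      have hintg : IntervalIntegrable (fun t : ℝ => (2*(n:ℝ)/D^2) * Real.cos (D * t))
          MeasureTheory.volume 0 T :=
        Continuous.intervalIntegrable (by fun_prop) 0 T
      rw [intervalIntegral.integral_add (intervalIntegrable_const) hintg,
        intervalIntegral.integral_const, intervalIntegral.integral_const_mul, hcosint T,
        smul_eq_mul]
      field_simp
      ring
    have hzero : Tendsto (fun T : ℝ => Real.sin (D*T) / T) atTop (nhds 0) := by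
      refine squeeze_zero_norm' (a := fun T : ℝ => T⁻¹) ?_ tendsto_inv_atTop_zero
      · filter_upwards [eventually_ge_atTop (1:ℝ)] with T hT
        have hT0 : (0:ℝ) < T := by linarith
        rw [norm_div, Real.norm_eq_abs, Real.norm_eq_abs, abs_of_pos hT0,
          div_le_iff₀ hT0, inv_mul_cancel₀ hT0.ne']
        exact Real.abs_sin_le_one _
    have hmain : Tendsto (fun T : ℝ =>
        ((ℓ:ℝ)^2 + 2*(n:ℝ))/D^2 + (2*(n:ℝ)/D^3) * (Real.sin (D*T) / T))
        atTop (nhds (((ℓ:ℝ)^2 + 2*(n:ℝ))/D^2 + (2*(n:ℝ)/D^3) * 0)) :=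
      tendsto_const_nhds.add (hzero.const_mul _)
    have heq : ∀ᶠ T : ℝ in atTop, ((ℓ:ℝ)^2 + 2*(n:ℝ))/D^2 + (2*(n:ℝ)/D^3) * (Real.sin (D*T) / T)
        = (1 / T) * ∫ t in (0:ℝ)..T,
            ‖(NormedSpace.exp ((-Complex.I * (t : ℂ)) • A))
              (Sum.inl ()) (Sum.inl ())‖ ^ 2 := by
      filter_upwards [eventually_gt_atTop (0:ℝ)] with T hT
      rw [hint T]
      field_simp
    have hp : (1 - (1 / 2) * ((n : ℝ) / ((n : ℝ) + ((ℓ : ℝ) / 2) ^ 2)))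
        = ((ℓ:ℝ)^2 + 2*(n:ℝ))/D^2 + (2*(n:ℝ)/D^3) * 0 := by
      rw [hD2, mul_zero, add_zero]
      have hden : ((n:ℝ) + ((ℓ:ℝ)/2)^2) ≠ 0 := by positivity
      have hden2 : ((ℓ:ℝ)^2 + 4*(n:ℝ)) ≠ 0 := by positivity
      field_simp
      ring
    rw [hp]
    exact hmain.congr' heq
  · have h1 : (0:ℝ) < (n:ℝ) + ((ℓ:ℝ)/2)^2 := by positivity
    have h2 : (n:ℝ) / ((n:ℝ) + ((ℓ:ℝ)/2)^2) ≤ 1 := by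
      rw [div_le_one h1]; nlinarith
    linarith
end

section
/- Let G and H be circulants of degrees k, ℓ and orders m, n, and let Δ = (k−ℓ)² + 4mn. Assume the smaller join eigenvalue λ_− = ((k+ℓ) − √Δ)/2 does not belong to Sp(G)∖{k} or Sp(H)∖{ℓ}. For the continuous-time quantum walk on G + H starting at a vertex x₀ of G, the average probability of every vertex y of H equals 2/Δ. -/
open Matrix Complex Filter Real

open NormedSpace in
lemma exp_intertwine {ι κ : Type*} [Fintype ι] [DecidableEq ι] [Fintype κ] [DecidableEq κ]
    (M : Matrix ι ι ℂ) (N : Matrix κ κ ℂ) (X : Matrix ι κ ℂ) (h : M * X = X * N) :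
    exp M * X = X * exp N := by
  letI : SeminormedRing (Matrix ι ι ℂ) := Matrix.linftyOpSemiNormedRing
  letI : NormedRing (Matrix ι ι ℂ) := Matrix.linftyOpNormedRing
  letI : NormedAlgebra ℂ (Matrix ι ι ℂ) := Matrix.linftyOpNormedAlgebra
  letI : SeminormedRing (Matrix κ κ ℂ) := Matrix.linftyOpSemiNormedRing
  letI : NormedRing (Matrix κ κ ℂ) := Matrix.linftyOpNormedRing
  letI : NormedAlgebra ℂ (Matrix κ κ ℂ) := Matrix.linftyOpNormedAlgebra
  have hpow : ∀ j : ℕ, M ^ j * X = X * N ^ j := by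
    intro j
    induction j with
    | zero => simp
    | succ j ih =>
      rw [pow_succ, pow_succ, Matrix.mul_assoc, h, ← Matrix.mul_assoc, ih, Matrix.mul_assoc]
  have hsM : Summable (fun j : ℕ => (j.factorial : ℂ)⁻¹ • M ^ j) := expSeries_summable' M
  have hsN : Summable (fun j : ℕ => (j.factorial : ℂ)⁻¹ • N ^ j) := expSeries_summable' N
  let L : Matrix ι ι ℂ →L[ℂ] Matrix ι κ ℂ :=
    { toFun := fun Y => Y * X
      map_add' := fun a b => Matrix.add_mul a b X
      map_smul' := fun c a => Matrix.smul_mul c a X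
      cont := continuous_id.matrix_mul continuous_const }
  let R : Matrix κ κ ℂ →L[ℂ] Matrix ι κ ℂ :=
    { toFun := fun Y => X * Y
      map_add' := fun a b => Matrix.mul_add X a b
      map_smul' := fun c a => Matrix.mul_smul X c a
      cont := continuous_const.matrix_mul continuous_id }
  have hM : HasSum (fun j : ℕ => (j.factorial : ℂ)⁻¹ • M ^ j) (exp M) := by
    rw [exp_eq_tsum ℂ]; exact hsM.hasSum
  have hN : HasSum (fun j : ℕ => (j.factorial : ℂ)⁻¹ • N ^ j) (exp N) := by
    rw [exp_eq_tsum ℂ]; exact hsN.hasSum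
  have h1 : HasSum (fun j : ℕ => L ((j.factorial : ℂ)⁻¹ • M ^ j)) (L (exp M)) :=
    L.hasSum hM
  have h2 : HasSum (fun j : ℕ => R ((j.factorial : ℂ)⁻¹ • N ^ j)) (R (exp N)) :=
    R.hasSum hN
  have h3 : (fun j : ℕ => L ((j.factorial : ℂ)⁻¹ • M ^ j))
      = fun j : ℕ => R ((j.factorial : ℂ)⁻¹ • N ^ j) := by
    funext j
    show ((j.factorial : ℂ)⁻¹ • M ^ j) * X = X * ((j.factorial : ℂ)⁻¹ • N ^ j)
    rw [Matrix.smul_mul, hpow j, Matrix.mul_smul]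
  exact (h3 ▸ h1).unique h2

lemma abs_exp_sub_exp_sq (α β : ℝ) :
    ‖Complex.exp (α * Complex.I) - Complex.exp (β * Complex.I)‖ ^ 2
      = 2 - 2 * Real.cos (α - β) := by
  rw [Complex.sq_norm]
  have h1 : Complex.exp (α * Complex.I) - Complex.exp (β * Complex.I)
      = Complex.ofReal (Real.cos α - Real.cos β)
        + Complex.ofReal (Real.sin α - Real.sin β) * Complex.I := by
    rw [Complex.exp_mul_I, Complex.exp_mul_I, ← Complex.ofReal_cos, ← Complex.ofReal_sin,
      ← Complex.ofReal_cos, ← Complex.ofReal_sin]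
    push_cast
    ring
  rw [h1, Complex.normSq_add_mul_I, Real.cos_sub]
  nlinarith [Real.sin_sq_add_cos_sq α, Real.sin_sq_add_cos_sq β]

/-- For circulants `G`, `H` of degrees `k`, `ℓ` and orders `m`, `n`, with
`Δ = (k−ℓ)² + 4mn`, if the smaller join eigenvalue `λ₋ = ((k+ℓ)−√Δ)/2` is not in
`Sp(G)∖{k}` nor in `Sp(H)∖{ℓ}`, then for the quantum walk on `G + H` started at a vertex
`x₀` of `G`, the average probability of every vertex of `H` equals `2/Δ`. -/
theorem join_avg_prob_on_H (m n : ℕ) [NeZero m] [NeZero n] (k ℓ : ℕ)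
    (g : ZMod m → Prop) [DecidablePred g] (hg0 : ¬ g 0) (hgs : ∀ d, g (-d) ↔ g d)
    (h : ZMod n → Prop) [DecidablePred h] (hh0 : ¬ h 0) (hhs : ∀ d, h (-d) ↔ h d)
    (AG : Matrix (ZMod m) (ZMod m) ℝ) (hAG : ∀ i j, AG i j = if g (j - i) then 1 else 0)
    (AH : Matrix (ZMod n) (ZMod n) ℝ) (hAH : ∀ i j, AH i j = if h (j - i) then 1 else 0)
    (hdegG : ∀ i : ZMod m, ∑ j : ZMod m, AG i j = (k : ℝ))
    (hdegH : ∀ i : ZMod n, ∑ j : ZMod n, AH i j = (ℓ : ℝ))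
    (μ : ZMod m → ℝ)
    (hμ : ∀ j : ZMod m, μ j = ∑ d : ZMod m, AG 0 d * Real.cos (2 * Real.pi * j.val * d.val / m))
    (ν : ZMod n → ℝ)
    (hν : ∀ j : ZMod n, ν j = ∑ d : ZMod n, AH 0 d * Real.cos (2 * Real.pi * j.val * d.val / n))
    (Δ lamMinus : ℝ)
    (hΔ : Δ = ((k : ℝ) - ℓ) ^ 2 + 4 * m * n)
    (hlam : lamMinus = (((k : ℝ) + ℓ) - Real.sqrt Δ) / 2)
    (havoidG : ∀ j : ZMod m, j ≠ 0 → μ j ≠ lamMinus)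
    (havoidH : ∀ j : ZMod n, j ≠ 0 → ν j ≠ lamMinus)
    (A : Matrix (ZMod m ⊕ ZMod n) (ZMod m ⊕ ZMod n) ℝ)
    (hGG : ∀ i j : ZMod m, A (Sum.inl i) (Sum.inl j) = AG i j)
    (hHH : ∀ i j : ZMod n, A (Sum.inr i) (Sum.inr j) = AH i j)
    (hGH : ∀ (i : ZMod m) (j : ZMod n), A (Sum.inl i) (Sum.inr j) = 1)
    (hHG : ∀ (i : ZMod n) (j : ZMod m), A (Sum.inr i) (Sum.inl j) = 1)
    (x₀ : ZMod m) :
    ∀ y : ZMod n, avgProb (A.map Complex.ofReal) (Sum.inl x₀) (Sum.inr y) (2 / Δ) := by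
  intro y
  have hm1 : (1:ℝ) ≤ (m:ℝ) := by exact_mod_cast Nat.one_le_iff_ne_zero.2 (NeZero.ne m)
  have hn1 : (1:ℝ) ≤ (n:ℝ) := by exact_mod_cast Nat.one_le_iff_ne_zero.2 (NeZero.ne n)
  have hΔpos : 0 < Δ := by rw [hΔ]; nlinarith
  set s : ℝ := Real.sqrt Δ with hsdef
  have hspos : 0 < s := Real.sqrt_pos.2 hΔpos
  have hs2 : s ^ 2 = Δ := Real.sq_sqrt hΔpos.le
  have hsΔ : s ^ 2 = ((k : ℝ) - ℓ) ^ 2 + 4 * m * n := by rw [hs2, hΔ]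
  set lp : ℝ := (((k:ℝ) + ℓ) + s) / 2 with hlp
  have hlm : lamMinus = (((k:ℝ) + ℓ) - s) / 2 := hlam
  have hcharp : (m:ℝ) * n + ℓ * (lp - k) = lp * (lp - k) := by
    rw [hlp]; nlinarith [hsΔ]
  have hcharm : (m:ℝ) * n + ℓ * (lamMinus - k) = lamMinus * (lamMinus - k) := by
    rw [hlm]; nlinarith [hsΔ]
  have hdiff : lp - lamMinus = s := by rw [hlp, hlm]; ring
  set Ac : Matrix (ZMod m ⊕ ZMod n) (ZMod m ⊕ ZMod n) ℂ := A.map Complex.ofReal with hAc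
  have hAcGG : ∀ i j, Ac (Sum.inl i) (Sum.inl j) = ((AG i j : ℝ) : ℂ) := by
    intro i j; rw [hAc, Matrix.map_apply, hGG]
  have hAcHH : ∀ i j, Ac (Sum.inr i) (Sum.inr j) = ((AH i j : ℝ) : ℂ) := by
    intro i j; rw [hAc, Matrix.map_apply, hHH]
  have hAcGH : ∀ i j, Ac (Sum.inl i) (Sum.inr j) = 1 := by
    intro i j; rw [hAc, Matrix.map_apply, hGH]; norm_num
  have hAcHG : ∀ i j, Ac (Sum.inr i) (Sum.inl j) = 1 := by
    intro i j; rw [hAc, Matrix.map_apply, hHG]; norm_num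
  have hAGs : ∀ i j, AG i j = AG j i := by
    intro i j
    rw [hAG, hAG, show (i - j : ZMod m) = -(j - i) by ring]
    exact if_congr (hgs _).symm rfl rfl
  have hAHs : ∀ i j, AH i j = AH j i := by
    intro i j
    rw [hAH, hAH, show (i - j : ZMod n) = -(j - i) by ring]
    exact if_congr (hhs _).symm rfl rfl
  have hsymm : Acᵀ = Ac := by
    ext a b
    rw [Matrix.transpose_apply]
    cases a with
    | inl i => cases b with
      | inl j => rw [hAcGG, hAcGG, hAGs]
      | inr j => rw [hAcGH, hAcHG]
    | inr i => cases b with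
      | inl j => rw [hAcHG, hAcGH]
      | inr j => rw [hAcHH, hAcHH, hAHs]
  have hrowG : ∀ i : ZMod m, ∑ j : ZMod m, ((AG i j : ℝ) : ℂ) = ((k:ℝ) : ℂ) := by
    intro i; rw [← Complex.ofReal_sum, hdegG i]
  have hrowH : ∀ i : ZMod n, ∑ j : ZMod n, ((AH i j : ℝ) : ℂ) = ((ℓ:ℝ) : ℂ) := by
    intro i; rw [← Complex.ofReal_sum, hdegH i]
  have hn0 : ((n:ℝ) : ℂ) ≠ 0 := by
    simp only [ne_eq, Complex.ofReal_eq_zero]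
    positivity
  have hs0 : ((s:ℝ) : ℂ) ≠ 0 := by
    simp only [ne_eq, Complex.ofReal_eq_zero]
    exact hspos.ne'
  -- the key entry computation
  have key : ∀ t : ℝ,
      (NormedSpace.exp ((-Complex.I * (t : ℂ)) • Ac)) (Sum.inr y) (Sum.inl x₀)
        = (Complex.exp (-Complex.I * (t : ℂ) * (lp : ℂ))
            - Complex.exp (-Complex.I * (t : ℂ) * (lamMinus : ℂ))) / (s : ℂ) := by
    intro t
    set c : ℂ := -Complex.I * (t : ℂ) with hc
    set E : Matrix (ZMod m ⊕ ZMod n) (ZMod m ⊕ ZMod n) ℂ := NormedSpace.exp (c • Ac) with hE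
    have hEsymm : Eᵀ = E := by
      rw [hE, ← Matrix.exp_transpose, Matrix.transpose_smul, hsymm]
    -- constancy of E (inl x₀) (inr ·)
    have hconst : ∀ r : ZMod n, E (Sum.inl x₀) (Sum.inr r) = E (Sum.inl x₀) (Sum.inr y) := by
      intro r
      set cc : ZMod n := y - r with hcc
      set e : (ZMod m ⊕ ZMod n) ≃ (ZMod m ⊕ ZMod n) :=
        Equiv.sumCongr (Equiv.refl (ZMod m)) (Equiv.addRight cc) with he
      set P : Matrix (ZMod m ⊕ ZMod n) (ZMod m ⊕ ZMod n) ℂ :=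
        Matrix.of fun a b => if e a = b then 1 else 0 with hP
      have hmulP : ∀ (Mx : Matrix (ZMod m ⊕ ZMod n) (ZMod m ⊕ ZMod n) ℂ) a b,
          (Mx * P) a b = Mx a (e.symm b) := by
        intro Mx a b
        rw [Matrix.mul_apply]
        have hcond : ∀ v, (if e v = b then (1:ℂ) else 0) = if v = e.symm b then 1 else 0 :=
          fun v => by simp [Equiv.apply_eq_iff_eq_symm_apply]
        simp_rw [hP, Matrix.of_apply, hcond, mul_ite, mul_one, mul_zero,
          Finset.sum_ite_eq', Finset.mem_univ, if_true]
      have hPmul : ∀ (Mx : Matrix (ZMod m ⊕ ZMod n) (ZMod m ⊕ ZMod n) ℂ) a b,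
          (P * Mx) a b = Mx (e a) b := by
        intro Mx a b
        rw [Matrix.mul_apply]
        simp_rw [hP, Matrix.of_apply, ite_mul, one_mul, zero_mul,
          Finset.sum_ite_eq, Finset.mem_univ, if_true]
      have hesymm_inr : ∀ j : ZMod n, e.symm (Sum.inr j) = Sum.inr (j - cc) := by
        intro j; simp [he, Equiv.addRight, sub_eq_add_neg]
      have he_inr : ∀ j : ZMod n, e (Sum.inr j) = Sum.inr (j + cc) := by
        intro j; simp [he, Equiv.addRight]
      have hesymm_inl : ∀ i : ZMod m, e.symm (Sum.inl i) = Sum.inl i := by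
        intro i; simp [he]
      have he_inl : ∀ i : ZMod m, e (Sum.inl i) = Sum.inl i := by
        intro i; simp [he]
      have hAP : Ac * P = P * Ac := by
        ext a b
        rw [hmulP, hPmul]
        cases a with
        | inl i => cases b with
          | inl j => rw [hesymm_inl, he_inl]
          | inr j => rw [hesymm_inr, he_inl, hAcGH, hAcGH]
        | inr i => cases b with
          | inl j => rw [hesymm_inl, he_inr, hAcHG, hAcHG]
          | inr j =>
            rw [hesymm_inr, he_inr, hAcHH, hAcHH, hAH, hAH,
              show (j - cc - i : ZMod n) = j - (i + cc) by ring]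
      have hcAP : (c • Ac) * P = P * (c • Ac) := by
        rw [Matrix.smul_mul, hAP, Matrix.mul_smul]
      have hEP : E * P = P * E := by
        rw [hE]; exact exp_intertwine _ _ _ hcAP
      have h1 : (E * P) (Sum.inl x₀) (Sum.inr y) = (P * E) (Sum.inl x₀) (Sum.inr y) := by
        rw [hEP]
      rw [hmulP, hPmul, hesymm_inr, he_inl] at h1
      rw [show (y - cc : ZMod n) = r by rw [hcc]; ring] at h1
      exact h1
    -- eigenvector columns
    set lam : Fin 2 → ℝ := ![lp, lamMinus] with hlamdef
    have hlam0 : lam 0 = lp := rfl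
    have hlam1 : lam 1 = lamMinus := rfl
    set X : Matrix (ZMod m ⊕ ZMod n) (Fin 2) ℂ :=
      Matrix.of fun v j => Sum.elim (fun _ => ((n:ℝ) : ℂ)) (fun _ => ((lam j - k : ℝ) : ℂ)) v
      with hX
    have hAX : Ac * X = X * Matrix.diagonal (fun j => ((lam j : ℝ) : ℂ)) := by
      ext a b
      rw [Matrix.mul_diagonal, Matrix.mul_apply, Fintype.sum_sum_type]
      cases a with
      | inl i =>
        simp only [hX, Matrix.of_apply, Sum.elim_inl, Sum.elim_inr]
        simp_rw [hAcGG, hAcGH]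
        rw [← Finset.sum_mul, hrowG i]
        simp only [one_mul]
        rw [Finset.sum_const, Finset.card_univ, ZMod.card, nsmul_eq_mul]
        push_cast
        ring
      | inr r =>
        simp only [hX, Matrix.of_apply, Sum.elim_inl, Sum.elim_inr]
        simp_rw [hAcHG, hAcHH]
        simp only [one_mul]
        rw [← Finset.sum_mul, hrowH r, Finset.sum_const, Finset.card_univ, ZMod.card,
          nsmul_eq_mul]
        fin_cases b
        · rw [show (⟨0, by norm_num⟩ : Fin 2) = 0 from rfl, hlam0]
          have hcpC := congrArg Complex.ofReal hcharp
          push_cast at hcpC ⊢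
          linear_combination hcpC
        · rw [show (⟨1, by norm_num⟩ : Fin 2) = 1 from rfl, hlam1]
          have hcmC := congrArg Complex.ofReal hcharm
          push_cast at hcmC ⊢
          linear_combination hcmC
    have hdiagsmul : Matrix.diagonal (fun j => c * ((lam j : ℝ) : ℂ))
        = c • Matrix.diagonal (fun j => ((lam j : ℝ) : ℂ)) := by
      rw [← Matrix.diagonal_smul]
      rfl
    have hcAX : (c • Ac) * X = X * Matrix.diagonal (fun j => c * ((lam j : ℝ) : ℂ)) := by
      rw [Matrix.smul_mul, hAX, hdiagsmul, Matrix.mul_smul]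
    have hexpX : E * X = X * Matrix.diagonal (fun j => Complex.exp (c * ((lam j : ℝ) : ℂ))) := by
      have h0 := exp_intertwine (c • Ac) _ X hcAX
      rw [Matrix.exp_diagonal] at h0
      have hd : (NormedSpace.exp fun j : Fin 2 => c * ((lam j : ℝ) : ℂ))
          = fun j => Complex.exp (c * ((lam j : ℝ) : ℂ)) := by
        funext j
        rw [Pi.coe_exp, ← Complex.exp_eq_exp_ℂ]
      rw [hE, h0, hd]
    have hb : ∀ b : Fin 2,
        (∑ i : ZMod m, E (Sum.inl x₀) (Sum.inl i)) * ((n:ℝ) : ℂ)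
          + (∑ r : ZMod n, E (Sum.inl x₀) (Sum.inr r)) * ((lam b - k : ℝ) : ℂ)
          = ((n:ℝ) : ℂ) * Complex.exp (c * ((lam b : ℝ) : ℂ)) := by
      intro b
      have h1 : (E * X) (Sum.inl x₀) b
          = (X * Matrix.diagonal (fun j => Complex.exp (c * ((lam j : ℝ) : ℂ)))) (Sum.inl x₀) b := by
        rw [hexpX]
      rw [Matrix.mul_apply, Fintype.sum_sum_type, Matrix.mul_diagonal] at h1
      simp only [hX, Matrix.of_apply, Sum.elim_inl, Sum.elim_inr] at h1
      rw [← Finset.sum_mul, ← Finset.sum_mul] at h1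
      exact h1
    have hdC : ((lp - k : ℝ) : ℂ) - ((lamMinus - k : ℝ) : ℂ) = ((s:ℝ) : ℂ) := by
      have h2 := congrArg Complex.ofReal hdiff
      push_cast at h2 ⊢
      linear_combination h2
    have hsub : (∑ r : ZMod n, E (Sum.inl x₀) (Sum.inr r)) * ((s:ℝ) : ℂ)
        = ((n:ℝ) : ℂ) * (Complex.exp (c * ((lp : ℝ) : ℂ))
            - Complex.exp (c * ((lamMinus : ℝ) : ℂ))) := by
      have h0 := hb 0
      have h1 := hb 1
      rw [hlam0] at h0
      rw [hlam1] at h1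
      linear_combination h0 - h1 - (∑ r : ZMod n, E (Sum.inl x₀) (Sum.inr r)) * hdC
    have hSH : (∑ r : ZMod n, E (Sum.inl x₀) (Sum.inr r))
        = ((n:ℝ) : ℂ) * E (Sum.inl x₀) (Sum.inr y) := by
      calc (∑ r : ZMod n, E (Sum.inl x₀) (Sum.inr r))
          = ∑ _r : ZMod n, E (Sum.inl x₀) (Sum.inr y) :=
            Finset.sum_congr rfl fun r _ => hconst r
        _ = ((n:ℝ) : ℂ) * E (Sum.inl x₀) (Sum.inr y) := by
            rw [Finset.sum_const, Finset.card_univ, ZMod.card, nsmul_eq_mul]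
            push_cast
            ring
    have hsy : E (Sum.inr y) (Sum.inl x₀) = E (Sum.inl x₀) (Sum.inr y) := by
      have h2 := Matrix.transpose_apply E (Sum.inl x₀) (Sum.inr y)
      rw [hEsymm] at h2
      exact h2.symm
    rw [hsy, eq_div_iff hs0]
    apply mul_left_cancel₀ hn0
    rw [hSH] at hsub
    linear_combination hsub
  -- pointwise value of the probability
  have hint : ∀ t : ℝ,
      ‖(Complex.exp (-Complex.I * (t : ℂ) * (lp : ℂ))
          - Complex.exp (-Complex.I * (t : ℂ) * (lamMinus : ℂ))) / (s : ℂ)‖ ^ 2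
        = (2 - 2 * Real.cos (s * t)) / Δ := by
    intro t
    have harg1 : -Complex.I * (t : ℂ) * (lp : ℂ) = ((-(t * lp) : ℝ) : ℂ) * Complex.I := by
      push_cast; ring
    have harg2 : -Complex.I * (t : ℂ) * (lamMinus : ℂ)
        = ((-(t * lamMinus) : ℝ) : ℂ) * Complex.I := by
      push_cast; ring
    rw [norm_div, Complex.norm_of_nonneg hspos.le, div_pow, hs2, harg1, harg2,
      abs_exp_sub_exp_sq]
    rw [show (-(t * lp)) - (-(t * lamMinus)) = -(s * t) by rw [← hdiff]; ring, Real.cos_neg]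
  -- integral computation
  have hI : ∀ T : ℝ, (∫ t in (0:ℝ)..T, (2 - 2 * Real.cos (s * t)) / Δ)
      = (2 * T - 2 * (Real.sin (s * T)) / s) / Δ := by
    intro T
    rw [intervalIntegral.integral_div]
    congr 1
    have hcos : ∫ t in (0:ℝ)..T, Real.cos (s * t) = Real.sin (s * T) / s := by
      rw [intervalIntegral.integral_comp_mul_left (fun x => Real.cos x) hspos.ne']
      rw [mul_zero, integral_cos, Real.sin_zero, sub_zero, smul_eq_mul, inv_mul_eq_div]
    have hIg : IntervalIntegrable (fun t => 2 * Real.cos (s * t)) MeasureTheory.volume 0 T :=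
      Continuous.intervalIntegrable (by fun_prop) _ _
    rw [intervalIntegral.integral_sub (intervalIntegrable_const) hIg,
      intervalIntegral.integral_const, intervalIntegral.integral_const_mul, hcos]
    simp only [smul_eq_mul, sub_zero]
    ring
  -- the limit
  have hsin0 : Tendsto (fun T : ℝ => Real.sin (s * T) / T) atTop (nhds 0) := by
    apply squeeze_zero_norm' ?_ tendsto_inv_atTop_zero
    filter_upwards [eventually_ge_atTop (1:ℝ)] with T hT
    have hTpos : (0:ℝ) < T := lt_of_lt_of_le one_pos hT
    rw [Real.norm_eq_abs, abs_div, abs_of_pos hTpos]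
    have h1 : |Real.sin (s * T)| ≤ 1 := abs_le.mpr ⟨Real.neg_one_le_sin _, Real.sin_le_one _⟩
    calc |Real.sin (s * T)| / T ≤ 1 / T := by gcongr
      _ = T⁻¹ := one_div T
  have hmain : Tendsto (fun T : ℝ => 2 / Δ - (2 / (s * Δ)) * (Real.sin (s * T) / T)) atTop
      (nhds (2 / Δ)) := by
    have h2 := hsin0.const_mul (2 / (s * Δ))
    have h3 := (tendsto_const_nhds (x := 2 / Δ) (f := atTop (α := ℝ))).sub h2
    simpa using h3
  unfold avgProb
  apply hmain.congr'
  filter_upwards [eventually_gt_atTop (0:ℝ)] with T hTpos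
  have hcongr : (∫ t in (0:ℝ)..T, ‖
        (NormedSpace.exp ((-Complex.I * (t : ℂ)) • Ac)) (Sum.inr y) (Sum.inl x₀)‖ ^ 2)
      = ∫ t in (0:ℝ)..T, (2 - 2 * Real.cos (s * t)) / Δ := by
    apply intervalIntegral.integral_congr
    intro t _
    simp only [key, hint]
  rw [hcongr, hI T]
  field_simp
end

section
/- For the continuous-time quantum walk on the path P_m starting at endpoint vertex 1, the average probability of each vertex x satisfies p̄_x = (4/(m+1)²) Σ_{j=1}^m sin²(jπ/(m+1)) sin²(jxπ/(m+1)) ≤ 2/(m+1) + 4/(m+1)², hence P_m is average uniform mixing. -/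
open Matrix Complex Filter Real

lemma sum_cos_int (N : ℕ) (hN : 0 < N) (c : ℤ) :
    ∑ j ∈ Finset.range N, Real.cos (j * ((c : ℝ) * π / N)) =
      if (2 * (N : ℤ)) ∣ c then (N : ℝ) else if 2 ∣ c then 0 else 1 := by
  set θ : ℝ := (c : ℝ) * π / N with hθ
  set z : ℂ := Complex.exp (θ * I) with hz
  have hNne : (N : ℝ) ≠ 0 := Nat.cast_ne_zero.mpr hN.ne'
  have hzpow : ∀ j : ℕ, z ^ j = Complex.exp ((j * θ : ℝ) * I) := by
    intro j
    rw [hz, ← Complex.exp_nat_mul]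
    congr 1
    push_cast; ring
  have hre : ∀ j : ℕ, (z ^ j).re = Real.cos (j * θ) := by
    intro j; rw [hzpow, Complex.exp_ofReal_mul_I_re]
  have hsum : ∑ j ∈ Finset.range N, Real.cos (j * θ) = (∑ j ∈ Finset.range N, z ^ j).re := by
    rw [Complex.re_sum]
    exact Finset.sum_congr rfl fun j _ => (hre j).symm
  have hzN : z ^ N = (-1 : ℂ) ^ c := by
    rw [hzpow]
    have : ((N : ℝ) * θ : ℝ) = (c : ℝ) * π := by
      rw [hθ]; field_simp
    rw [this]
    rw [show (((c : ℝ) * π : ℝ) : ℂ) * I = (c : ℂ) * (π * I) by push_cast; ring]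
    rw [Complex.exp_int_mul]
    rw [Complex.exp_pi_mul_I]
  by_cases hdvd : (2 * (N : ℤ)) ∣ c
  · obtain ⟨k, hk⟩ := hdvd
    have hθ2 : θ = (k : ℝ) * (2 * π) := by
      rw [hθ, hk]; push_cast; field_simp
    have : ∀ j ∈ Finset.range N, Real.cos (j * θ) = 1 := by
      intro j _
      rw [hθ2, show (j : ℝ) * ((k : ℝ) * (2 * π)) = ((j * k : ℤ) : ℝ) * (2 * π) by push_cast; ring,
        Real.cos_int_mul_two_pi]
    rw [if_pos ⟨k, hk⟩, Finset.sum_congr rfl this, Finset.sum_const, Finset.card_range]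
    simp
  · have hz1 : z ≠ 1 := by
      intro h
      rw [hz, Complex.exp_eq_one_iff] at h
      obtain ⟨n, hn⟩ := h
      have hθn0 : θ = n * (2 * π) := by
        have h2 := congrArg Complex.im hn
        simpa using h2
      have hθn := hθn0
      apply hdvd
      refine ⟨n, ?_⟩
      have : (c : ℝ) = ((2 * (N : ℤ) * n : ℤ) : ℝ) := by
        have hπ : (π : ℝ) ≠ 0 := Real.pi_ne_zero
        rw [hθ] at hθn
        field_simp at hθn
        have h2 : (c : ℝ) * π = ((2 * (N : ℤ) * n : ℤ) : ℝ) * π := by push_cast; rw [hθn]; ring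
        exact mul_right_cancel₀ hπ h2
      exact_mod_cast this
    have hgeom : ∑ j ∈ Finset.range N, z ^ j = ((-1 : ℂ) ^ c - 1) / (z - 1) := by
      rw [geom_sum_eq hz1, hzN]
    rw [if_neg hdvd, hsum, hgeom]
    by_cases hev : (2 : ℤ) ∣ c
    · obtain ⟨k, hk⟩ := hev
      have : (-1 : ℂ) ^ c = 1 := by
        rw [hk, _root_.zpow_mul]; norm_num
      rw [if_pos ⟨k, hk⟩, this]
      simp
    · have hodd : (-1 : ℂ) ^ c = -1 := by
        rcases Int.even_or_odd c with he | ho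
        · exact absurd he.two_dvd hev
        · obtain ⟨k, hk⟩ := ho
          rw [hk, zpow_add₀ (by norm_num : (-1:ℂ) ≠ 0), _root_.zpow_mul]; norm_num
      rw [if_neg hev, hodd]
      have hzre : z.re = Real.cos θ := Complex.exp_ofReal_mul_I_re θ
      have hzim : z.im = Real.sin θ := Complex.exp_ofReal_mul_I_im θ
      have hcos : Real.cos θ ≠ 1 := by
        intro h
        apply hz1
        have hs : Real.sin θ = 0 := by
          have := Real.sin_sq_add_cos_sq θ
          nlinarith
        apply Complex.ext <;> simp [hzre, hzim, h, hs]
      have hns : Complex.normSq (z - 1) = 2 - 2 * Real.cos θ := by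
        rw [Complex.normSq_apply]
        simp only [Complex.sub_re, Complex.sub_im, Complex.one_re, Complex.one_im, hzre, hzim]
        have := Real.sin_sq_add_cos_sq θ
        nlinarith
      have hnsne : (2 : ℝ) - 2 * Real.cos θ ≠ 0 := by
        intro h
        apply hcos; linarith
      rw [Complex.div_re, hns]
      simp only [Complex.sub_re, Complex.sub_im, Complex.one_re, Complex.one_im, hzre, hzim]
      norm_num
      field_simp
      ring

/-- Sum over j = 1..m of cos(j c π/(m+1)), as a Fin m sum. -/
lemma sum_cos_fin (m : ℕ) (c : ℤ) :
    ∑ j : Fin m, Real.cos ((j.val + 1) * ((c : ℝ) * π / (m + 1))) =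
      (if (2 * ((m : ℤ) + 1)) ∣ c then ((m : ℝ) + 1) else if 2 ∣ c then 0 else 1) - 1 := by
  have h := sum_cos_int (m + 1) (Nat.succ_pos m) c
  rw [Finset.sum_range_succ'] at h
  push_cast at h ⊢
  rw [← Fin.sum_univ_eq_sum_range (fun j => Real.cos ((j + 1) * ((c : ℝ) * π / (m + 1)))) m] at h
  simp only [Nat.cast_zero, zero_mul, Real.cos_zero] at h
  push_cast at h
  linarith [h]

noncomputable def qv (m : ℕ) (j x : ℕ) : ℝ :=
  Real.sqrt (2 / (m + 1)) * Real.sin ((j + 1) * (x + 1) * π / (m + 1))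

noncomputable def Umat (m : ℕ) : Matrix (Fin m) (Fin m) ℂ :=
  fun a b => ((qv m a.val b.val : ℝ) : ℂ)

lemma Umat_mul_self (m : ℕ) : Umat m * Umat m = 1 := by
  ext x y
  rw [Matrix.mul_apply]
  have key : ∑ j : Fin m, qv m x.val j.val * qv m j.val y.val
      = if x = y then 1 else 0 := by
    have hm1 : (0:ℝ) < (m:ℝ) + 1 := by positivity
    have hsq : Real.sqrt (2 / (m + 1)) ^ 2 = 2 / ((m:ℝ) + 1) :=
      Real.sq_sqrt (by positivity)
    -- rewrite each term using product-to-sum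
    have hterm : ∀ j : Fin m,
        qv m x.val j.val * qv m j.val y.val
          = (1 / ((m:ℝ)+1)) * (Real.cos ((j.val + 1) * ((((x.val:ℤ) - y.val : ℤ) : ℝ) * π / (m+1)))
              - Real.cos ((j.val + 1) * ((((x.val:ℤ) + y.val + 2 : ℤ) : ℝ) * π / (m+1)))) := by
      intro j
      unfold qv
      have hA : ((x.val:ℝ) + 1) * ((j.val:ℝ) + 1) * π / (m+1)
          = (j.val + 1) * ((x.val:ℝ)+1) * π / (m+1) := by ring
      have hpts : ∀ A B : ℝ, Real.sin A * Real.sin B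
          = (Real.cos (A - B) - Real.cos (A + B)) / 2 := by
        intro A B
        have h0 := Real.cos_sub_cos (A - B) (A + B)
        have e1 : (A - B + (A + B)) / 2 = A := by ring
        have e2 : (A - B - (A + B)) / 2 = -B := by ring
        rw [e1, e2, Real.sin_neg] at h0
        linarith
      rw [show Real.sqrt (2/(m+1)) * Real.sin (((x.val:ℝ)+1)*((j.val:ℝ)+1)*π/(m+1)) *
            (Real.sqrt (2/(m+1)) * Real.sin (((j.val:ℝ)+1)*((y.val:ℝ)+1)*π/(m+1)))
          = Real.sqrt (2/(m+1))^2 * (Real.sin (((x.val:ℝ)+1)*((j.val:ℝ)+1)*π/(m+1)) *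
              Real.sin (((j.val:ℝ)+1)*((y.val:ℝ)+1)*π/(m+1))) by ring, hsq,
        hpts]
      have e1 : ((x.val:ℝ)+1)*((j.val:ℝ)+1)*π/(m+1) - ((j.val:ℝ)+1)*((y.val:ℝ)+1)*π/(m+1)
          = ((j.val:ℝ) + 1) * ((((x.val:ℤ) - y.val : ℤ) : ℝ) * π / (m+1)) := by
        push_cast; ring
      have e2 : ((x.val:ℝ)+1)*((j.val:ℝ)+1)*π/(m+1) + ((j.val:ℝ)+1)*((y.val:ℝ)+1)*π/(m+1)
          = ((j.val:ℝ) + 1) * ((((x.val:ℤ) + y.val + 2 : ℤ) : ℝ) * π / (m+1)) := by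
        push_cast; ring
      rw [e1, e2]
      ring
    rw [Finset.sum_congr rfl (fun j _ => hterm j), ← Finset.mul_sum, Finset.sum_sub_distrib]
    have h1 := sum_cos_fin m ((x.val:ℤ) - y.val)
    have h2 := sum_cos_fin m ((x.val:ℤ) + y.val + 2)
    rw [h1, h2]
    have hxlt := x.isLt
    have hylt := y.isLt
    have hd2 : ¬ (2 * ((m:ℤ)+1)) ∣ ((x.val:ℤ) + y.val + 2) := by
      intro hd
      have hpos : (0:ℤ) < (x.val:ℤ) + y.val + 2 := by positivity
      have hlt : (x.val:ℤ) + y.val + 2 < 2 * ((m:ℤ)+1) := by omega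
      have := Int.le_of_dvd hpos hd
      omega
    by_cases hxy : x = y
    · subst hxy
      rw [if_pos rfl]
      rw [if_pos (by simp : (2 * ((m:ℤ)+1)) ∣ ((x.val:ℤ) - x.val)),
        if_neg hd2, if_pos (by omega : (2:ℤ) ∣ ((x.val:ℤ) + x.val + 2))]
      have : ((m:ℝ)+1) ≠ 0 := by positivity
      field_simp
      ring
    · rw [if_neg hxy]
      have hvne : x.val ≠ y.val := fun h => hxy (Fin.ext h)
      have hd1 : ¬ (2 * ((m:ℤ)+1)) ∣ ((x.val:ℤ) - y.val) := by
        intro hd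
        have hc0 : ((x.val:ℤ) - y.val) ≠ 0 := by omega
        have habs := Int.le_of_dvd (abs_pos.mpr hc0) ((dvd_abs _ _).mpr hd)
        have hlt : |(x.val:ℤ) - y.val| < 2 * ((m:ℤ)+1) := by
          rw [abs_lt]; omega
        omega
      rw [if_neg hd1, if_neg hd2]
      by_cases hpar : (2:ℤ) ∣ ((x.val:ℤ) - y.val)
      · rw [if_pos hpar, if_pos (by omega : (2:ℤ) ∣ ((x.val:ℤ) + y.val + 2))]
        ring
      · rw [if_neg hpar, if_neg (by omega : ¬ (2:ℤ) ∣ ((x.val:ℤ) + y.val + 2))]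
        ring
  rw [show ∑ j : Fin m, Umat m x j * Umat m j y
      = ((∑ j : Fin m, qv m x.val j.val * qv m j.val y.val : ℝ) : ℂ) by
    rw [Complex.ofReal_sum]
    exact Finset.sum_congr rfl fun j _ => by simp [Umat, Complex.ofReal_mul], key]
  by_cases hxy : x = y
  · simp [hxy, Matrix.one_apply]
  · simp [hxy, Matrix.one_apply]

noncomputable def lamv (m j : ℕ) : ℝ := 2 * Real.cos ((j + 1) * π / (m + 1))

lemma A_mul_U (m : ℕ) (A : Matrix (Fin m) (Fin m) ℂ)
    (hA : ∀ j k : Fin m,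
      A j k = if (j.val + 1 = k.val ∨ k.val + 1 = j.val) then 1 else 0) :
    A * Umat m = Umat m * Matrix.diagonal (fun j : Fin m => ((lamv m j.val : ℝ) : ℂ)) := by
  ext x j
  rw [Matrix.mul_apply, Matrix.mul_diagonal]
  set β : ℝ := ((j.val : ℝ) + 1) * π / (m + 1) with hβ
  set g : ℕ → ℝ := fun n => Real.sqrt (2 / (m + 1)) * Real.sin (n * β) with hg
  have hUg : ∀ k : Fin m, Umat m k j = ((g (k.val + 1) : ℝ) : ℂ) := by
    intro k
    have harg : ((k.val:ℝ)+1)*((j.val:ℝ)+1)*π/((m:ℝ)+1) = ((k.val+1 : ℕ):ℝ) * β := by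
      push_cast; rw [hβ]; ring
    simp only [Umat, qv, hg]
    rw [harg]
  have hg0 : g 0 = 0 := by simp [hg]
  have hgm : g (m + 1) = 0 := by
    have : ((m : ℝ) + 1) * β = ((j.val : ℕ) + 1) * π := by
      rw [hβ]; push_cast; field_simp
    simp only [hg]
    rw [show ((m + 1 : ℕ) : ℝ) * β = (((j.val + 1 : ℕ)) : ℝ) * π by push_cast at this ⊢; linarith]
    rw [Real.sin_nat_mul_pi]
    ring
  have hsplit : ∀ k : Fin m, A x k =
      (if x.val + 1 = k.val then (1:ℂ) else 0) + (if k.val + 1 = x.val then (1:ℂ) else 0) := by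
    intro k
    rw [hA]
    by_cases h1 : x.val + 1 = k.val <;> by_cases h2 : k.val + 1 = x.val <;>
      simp [h1, h2] <;> omega
  have hsum : ∑ k : Fin m, A x k * Umat m k j
      = ((g x.val + g (x.val + 2) : ℝ) : ℂ) := by
    rw [Finset.sum_congr rfl fun k _ => by rw [hsplit k, hUg k]]
    rw [Finset.sum_congr rfl fun k _ => add_mul _ _ _, Finset.sum_add_distrib]
    have e1 : ∑ k : Fin m, (if x.val + 1 = k.val then (1:ℂ) else 0) * ((g (k.val+1) : ℝ) : ℂ)
        = ((g (x.val + 2) : ℝ) : ℂ) := by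
      by_cases h : x.val + 1 < m
      · rw [Finset.sum_eq_single (⟨x.val + 1, h⟩ : Fin m)]
        · simp
        · intro b _ hb
          rw [if_neg, zero_mul]
          intro hc
          exact hb (Fin.ext hc.symm)
        · intro h'; exact absurd (Finset.mem_univ _) h'
      · have hx1 : x.val + 1 = m := by omega
        rw [Finset.sum_eq_zero, show x.val + 2 = m + 1 by omega, hgm]
        · simp
        · intro b _
          rw [if_neg (by omega : ¬ x.val + 1 = b.val), zero_mul]
    have e2 : ∑ k : Fin m, (if k.val + 1 = x.val then (1:ℂ) else 0) * ((g (k.val+1) : ℝ) : ℂ)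
        = ((g x.val : ℝ) : ℂ) := by
      by_cases h : 0 < x.val
      · rw [Finset.sum_eq_single (⟨x.val - 1, by omega⟩ : Fin m)]
        · rw [if_pos (show ((⟨x.val - 1, by omega⟩ : Fin m) : ℕ) + 1 = x.val by
              simp only [Fin.val_mk]; omega), one_mul]
          congr 2
          simp only [Fin.val_mk]
          omega
        · intro b _ hb
          rw [if_neg, zero_mul]
          intro hc
          apply hb
          apply Fin.ext
          simp only [Fin.val_mk]
          omega
        · intro h'; exact absurd (Finset.mem_univ _) h'
      · have hx0 : x.val = 0 := by omega
        rw [Finset.sum_eq_zero, hx0, hg0]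
        · simp
        · intro b _
          rw [if_neg (by omega : ¬ b.val + 1 = x.val), zero_mul]
    rw [e1, e2]
    push_cast
    ring
  rw [hsum, hUg x]
  have htri : g x.val + g (x.val + 2) = lamv m j.val * g (x.val + 1) := by
    have hs1 : Real.sin (((x.val:ℝ)+2) * β)
        = Real.sin (((x.val:ℝ)+1)*β) * Real.cos β + Real.cos (((x.val:ℝ)+1)*β) * Real.sin β := by
      have := Real.sin_add (((x.val:ℝ)+1)*β) β
      rw [show ((x.val:ℝ)+1)*β + β = ((x.val:ℝ)+2)*β by ring] at this
      exact this
    have hs2 : Real.sin ((x.val:ℝ) * β)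
        = Real.sin (((x.val:ℝ)+1)*β) * Real.cos β - Real.cos (((x.val:ℝ)+1)*β) * Real.sin β := by
      have := Real.sin_sub (((x.val:ℝ)+1)*β) β
      rw [show ((x.val:ℝ)+1)*β - β = (x.val:ℝ)*β by ring] at this
      exact this
    simp only [hg, lamv, ← hβ]
    push_cast
    linear_combination Real.sqrt (2/((m:ℝ)+1)) * hs1 + Real.sqrt (2/((m:ℝ)+1)) * hs2
  rw [htri]
  push_cast
  ring

lemma exp_pi_apply {n : Type*} [Fintype n] [DecidableEq n] (v : n → ℂ) :
    NormedSpace.exp v = fun i => Complex.exp (v i) := by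
  ext i
  simp [Pi.exp_def, ← Complex.exp_eq_exp_ℂ]

lemma exp_entry (m : ℕ) (A : Matrix (Fin m) (Fin m) ℂ)
    (hA : ∀ j k : Fin m,
      A j k = if (j.val + 1 = k.val ∨ k.val + 1 = j.val) then 1 else 0)
    (t : ℝ) (x s : Fin m) :
    NormedSpace.exp ((-Complex.I * (t:ℂ)) • A) x s
      = ∑ j : Fin m, ((qv m x.val j.val * qv m j.val s.val : ℝ) : ℂ)
          * Complex.exp (((-(t * lamv m j.val) : ℝ) : ℂ) * I) := by
  have hU : IsUnit (Umat m) := (Matrix.isUnit_iff_isUnit_det _).mpr (Matrix.isUnit_det_of_left_inverse (Umat_mul_self m))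
  have hUinv : (Umat m)⁻¹ = Umat m := Matrix.inv_eq_left_inv (Umat_mul_self m)
  have hAeq : A = Umat m * Matrix.diagonal (fun j : Fin m => ((lamv m j.val : ℝ) : ℂ)) * Umat m := by
    calc A = A * (Umat m * Umat m) := by rw [Umat_mul_self]; rw [mul_one]
    _ = (A * Umat m) * Umat m := by rw [mul_assoc]
    _ = _ := by rw [A_mul_U m A hA]
  have hconj : (-Complex.I * (t:ℂ)) • A
      = Umat m * ((-Complex.I * (t:ℂ)) • Matrix.diagonal (fun j : Fin m => ((lamv m j.val : ℝ) : ℂ))) * (Umat m)⁻¹ := by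
    rw [hUinv, Matrix.mul_smul, Matrix.smul_mul, ← hAeq]
  rw [hconj, Matrix.exp_conj _ _ hU, hUinv]
  have hdiag : ((-Complex.I * (t:ℂ)) • Matrix.diagonal (fun j : Fin m => ((lamv m j.val : ℝ) : ℂ)))
      = Matrix.diagonal (fun j : Fin m => (-Complex.I * (t:ℂ)) * ((lamv m j.val : ℝ) : ℂ)) := by
    rw [← Matrix.diagonal_smul]
    rfl
  rw [hdiag, Matrix.exp_diagonal, exp_pi_apply]
  rw [Matrix.mul_apply]
  apply Finset.sum_congr rfl
  intro j _
  rw [Matrix.mul_diagonal]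
  have : Complex.exp (-Complex.I * (t:ℂ) * ((lamv m j.val : ℝ) : ℂ))
      = Complex.exp (((-(t * lamv m j.val) : ℝ) : ℂ) * I) := by
    congr 1
    push_cast
    ring
  rw [this]
  simp only [Umat]
  push_cast
  ring

lemma abs_sq_sum {n : ℕ} (c a : Fin n → ℝ) :
    ‖∑ j, ((c j : ℝ) : ℂ) * Complex.exp (((a j : ℝ) : ℂ) * I)‖ ^ 2
      = ∑ j, ∑ k, c j * c k * Real.cos (a j - a k) := by
  rw [Complex.sq_norm, Complex.normSq_apply]
  have hre : (∑ j, ((c j : ℝ) : ℂ) * Complex.exp (((a j : ℝ) : ℂ) * I)).re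
      = ∑ j, c j * Real.cos (a j) := by
    rw [Complex.re_sum]
    refine Finset.sum_congr rfl fun j _ => ?_
    simp [Complex.mul_re, Complex.exp_ofReal_mul_I_re, Complex.exp_ofReal_mul_I_im]
  have him : (∑ j, ((c j : ℝ) : ℂ) * Complex.exp (((a j : ℝ) : ℂ) * I)).im
      = ∑ j, c j * Real.sin (a j) := by
    rw [Complex.im_sum]
    refine Finset.sum_congr rfl fun j _ => ?_
    simp [Complex.mul_im, Complex.exp_ofReal_mul_I_re, Complex.exp_ofReal_mul_I_im]
  rw [hre, him, Finset.sum_mul_sum, Finset.sum_mul_sum, ← Finset.sum_add_distrib]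
  refine Finset.sum_congr rfl fun j _ => ?_
  rw [← Finset.sum_add_distrib]
  refine Finset.sum_congr rfl fun k _ => ?_
  rw [Real.cos_sub]
  ring

lemma avg_tendsto {n : ℕ} (c lam : Fin n → ℝ) (hdist : ∀ j k, lam j = lam k → j = k) :
    Tendsto (fun T : ℝ => (1 / T) * ∫ t in (0:ℝ)..T,
        ∑ j, ∑ k, c j * c k * Real.cos (t * (lam j - lam k)))
      atTop (nhds (∑ j, c j ^ 2)) := by
  set p : ℝ := ∑ j, c j ^ 2 with hp
  set R : ℝ → ℝ := fun T => ∑ j : Fin n, ∑ k : Fin n,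
      (if j = k then 0 else c j * c k * (Real.sin (T * (lam j - lam k)) / (lam j - lam k))) with hR
  have hint : ∀ T : ℝ, (∫ t in (0:ℝ)..T,
      ∑ j, ∑ k, c j * c k * Real.cos (t * (lam j - lam k))) = T * p + R T := by
    intro T
    have hcont : ∀ (j k : Fin n), Continuous (fun t : ℝ => c j * c k * Real.cos (t * (lam j - lam k))) := by
      intro j k; fun_prop
    rw [intervalIntegral.integral_finset_sum (fun j _ =>
      (Continuous.intervalIntegrable (by fun_prop) _ _))]
    have : ∀ j : Fin n, (∫ t in (0:ℝ)..T, ∑ k, c j * c k * Real.cos (t * (lam j - lam k)))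
        = ∑ k, ∫ t in (0:ℝ)..T, c j * c k * Real.cos (t * (lam j - lam k)) := fun j =>
      intervalIntegral.integral_finset_sum (fun k _ => (hcont j k).intervalIntegrable _ _)
    rw [Finset.sum_congr rfl fun j _ => this j]
    have hterm : ∀ j k : Fin n, (∫ t in (0:ℝ)..T, c j * c k * Real.cos (t * (lam j - lam k)))
        = (if j = k then T * c j ^ 2
            else c j * c k * (Real.sin (T * (lam j - lam k)) / (lam j - lam k))) := by
      intro j k
      rw [intervalIntegral.integral_const_mul]
      by_cases hjk : j = k
      · subst hjk
        simp
        ring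
      · have hΔ : lam j - lam k ≠ 0 := fun h => hjk (hdist j k (by linarith [sub_eq_zero.mp h]))
        rw [if_neg hjk]
        have : (∫ t in (0:ℝ)..T, Real.cos (t * (lam j - lam k)))
            = Real.sin (T * (lam j - lam k)) / (lam j - lam k) := by
          rw [intervalIntegral.integral_comp_mul_right Real.cos hΔ]
          simp [integral_cos, div_eq_inv_mul]
        rw [this]
    rw [Finset.sum_congr rfl fun j _ => Finset.sum_congr rfl fun k _ => hterm j k]
    have hsplit : ∀ j k : Fin n, (if j = k then T * c j ^ 2
            else c j * c k * (Real.sin (T * (lam j - lam k)) / (lam j - lam k)))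
        = (if j = k then T * c j ^ 2 else 0)
          + (if j = k then 0 else c j * c k * (Real.sin (T * (lam j - lam k)) / (lam j - lam k))) := by
      intro j k; by_cases hjk : j = k <;> simp [hjk]
    rw [Finset.sum_congr rfl fun j _ => Finset.sum_congr rfl fun k _ => hsplit j k]
    rw [Finset.sum_congr rfl fun j (_ : j ∈ Finset.univ) => Finset.sum_add_distrib,
      Finset.sum_add_distrib]
    congr 1
    rw [Finset.mul_sum]
    refine Finset.sum_congr rfl fun j _ => ?_
    simp
  set C : ℝ := ∑ j : Fin n, ∑ k : Fin n,
      (if j = k then 0 else |c j * c k| / |lam j - lam k|) with hC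
  have hRC : ∀ T : ℝ, |R T| ≤ C := by
    intro T
    refine (Finset.abs_sum_le_sum_abs _ _).trans (Finset.sum_le_sum fun j _ => ?_)
    refine (Finset.abs_sum_le_sum_abs _ _).trans (Finset.sum_le_sum fun k _ => ?_)
    by_cases hjk : j = k
    · simp [hjk]
    · rw [if_neg hjk, if_neg hjk, abs_mul, abs_div]
      calc |c j * c k| * (|Real.sin (T * (lam j - lam k))| / |lam j - lam k|)
          ≤ |c j * c k| * (1 / |lam j - lam k|) := by
            gcongr
            exact Real.abs_sin_le_one _
        _ = |c j * c k| / |lam j - lam k| := by rw [mul_one_div]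
  have hzero : Tendsto (fun T : ℝ => (1 / T) * R T) atTop (nhds 0) := by
    apply squeeze_zero_norm' (a := fun T : ℝ => C / T)
    · filter_upwards [eventually_gt_atTop (0:ℝ)] with T hT
      have h1 : ‖1/T * R T‖ = 1/T * |R T| := by
        rw [Real.norm_eq_abs, abs_mul, abs_of_pos (one_div_pos.mpr hT)]
      have h2 : C / T = 1/T * C := by ring
      rw [h1, h2]
      exact mul_le_mul_of_nonneg_left (hRC T) (le_of_lt (one_div_pos.mpr hT))
    · exact tendsto_const_nhds.div_atTop tendsto_id
  have hmain : Tendsto (fun T : ℝ => p + (1 / T) * R T) atTop (nhds (p + 0)) :=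
    tendsto_const_nhds.add hzero
  rw [add_zero] at hmain
  refine hmain.congr' ?_
  filter_upwards [eventually_gt_atTop (0:ℝ)] with T hT
  rw [hint T]
  field_simp

/-- For the quantum walk on the path `P_m` started at the endpoint
(vertex 1), the average probability at each vertex `x` equals
`(4/(m+1)²) Σ_{j=1}^m sin²(jπ/(m+1)) sin²(jxπ/(m+1)) ≤ 2/(m+1) + 4/(m+1)²`;
hence `P_m` is average uniform mixing.
(Vertices `1,...,m` are represented by `Fin m` via `x ↦ x+1`.) -/
theorem path_average_uniform_mixing (m : ℕ) (hm : 0 < m)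
    (A : Matrix (Fin m) (Fin m) ℂ)
    (hA : ∀ j k : Fin m,
      A j k = if (j.val + 1 = k.val ∨ k.val + 1 = j.val) then 1 else 0)
    (x : Fin m) :
    avgProb A ⟨0, hm⟩ x
        ((4 / ((m : ℝ) + 1) ^ 2) * ∑ j : Fin m,
          Real.sin ((j.val + 1) * Real.pi / (m + 1)) ^ 2
            * Real.sin ((j.val + 1) * (x.val + 1) * Real.pi / (m + 1)) ^ 2) ∧
    (4 / ((m : ℝ) + 1) ^ 2) * (∑ j : Fin m,
          Real.sin ((j.val + 1) * Real.pi / (m + 1)) ^ 2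
            * Real.sin ((j.val + 1) * (x.val + 1) * Real.pi / (m + 1)) ^ 2)
      ≤ 2 / ((m : ℝ) + 1) + 4 / ((m : ℝ) + 1) ^ 2 := by
  have hm1 : (0:ℝ) < (m:ℝ) + 1 := by positivity
  constructor
  · set s0 : Fin m := ⟨0, hm⟩ with hs0
    set c : Fin m → ℝ := fun j => qv m x.val j.val * qv m j.val s0.val with hc
    set Λ : Fin m → ℝ := fun j => lamv m j.val with hΛ
    have hdist : ∀ j k : Fin m, Λ j = Λ k → j = k := by
      intro j k h
      simp only [hΛ, lamv] at h
      have hcos : Real.cos (((j.val:ℝ) + 1) * π / (m + 1))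
          = Real.cos (((k.val:ℝ) + 1) * π / (m + 1)) := by linarith
      have hmem : ∀ a : Fin m, ((a.val:ℝ) + 1) * π / (m + 1) ∈ Set.Icc 0 π := by
        intro a
        constructor
        · positivity
        · rw [div_le_iff₀ hm1]
          have ha : ((a.val:ℝ) + 1) ≤ (m:ℝ) + 1 := by
            have h0 := a.isLt
            have h' : (a.val + 1 : ℕ) ≤ m + 1 := by omega
            exact_mod_cast h'
          nlinarith [Real.pi_pos, ha]
      have := Real.injOn_cos (hmem j) (hmem k) hcos
      field_simp at this
      exact Fin.ext (by exact_mod_cast add_right_cancel this)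
    have hcong : ∀ t : ℝ,
        ‖(NormedSpace.exp ((-Complex.I * (t : ℂ)) • A)) x s0‖ ^ 2
          = ∑ j, ∑ k, c j * c k * Real.cos (t * (Λ j - Λ k)) := by
      intro t
      rw [exp_entry m A hA t x s0]
      have h2 := abs_sq_sum c (fun j => -(t * Λ j))
      simp only [hc, hΛ] at h2 ⊢
      rw [h2]
      refine Finset.sum_congr rfl fun j _ => Finset.sum_congr rfl fun k _ => ?_
      rw [show -(t * lamv m j.val) - -(t * lamv m k.val)
          = -(t * (lamv m j.val - lamv m k.val)) by ring, Real.cos_neg]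
    have hp : (∑ j, c j ^ 2) = (4 / ((m : ℝ) + 1) ^ 2) * ∑ j : Fin m,
        Real.sin ((j.val + 1) * Real.pi / (m + 1)) ^ 2
          * Real.sin ((j.val + 1) * (x.val + 1) * Real.pi / (m + 1)) ^ 2 := by
      rw [Finset.mul_sum]
      refine Finset.sum_congr rfl fun j _ => ?_
      have hsq : Real.sqrt (2 / ((m:ℝ) + 1)) ^ 2 = 2 / ((m:ℝ)+1) := Real.sq_sqrt (by positivity)
      simp only [hc, hs0, qv]
      have e1 : ((x.val:ℝ)+1)*((j.val:ℝ)+1)*π/((m:ℝ)+1) = ((j.val:ℝ)+1)*((x.val:ℝ)+1)*π/((m:ℝ)+1) := by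
        ring
      have e2 : ((j.val:ℝ)+1)*((((0:ℕ):ℝ))+1)*π/((m:ℝ)+1) = ((j.val:ℝ)+1)*π/((m:ℝ)+1) := by
        norm_num
      rw [show (((⟨0, hm⟩ : Fin m) : ℕ) : ℝ) = ((0:ℕ):ℝ) from rfl]
      rw [e1, e2]
      have expand : (Real.sqrt (2/((m:ℝ)+1)) * Real.sin (((j.val:ℝ)+1)*((x.val:ℝ)+1)*π/((m:ℝ)+1)) *
          (Real.sqrt (2/((m:ℝ)+1)) * Real.sin (((j.val:ℝ)+1)*π/((m:ℝ)+1)))) ^ 2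
          = (Real.sqrt (2/((m:ℝ)+1))^2) * (Real.sqrt (2/((m:ℝ)+1))^2) *
            (Real.sin (((j.val:ℝ)+1)*π/((m:ℝ)+1))^2 * Real.sin (((j.val:ℝ)+1)*((x.val:ℝ)+1)*π/((m:ℝ)+1))^2) := by
        ring
      rw [expand, hsq]
      field_simp
      ring
    have hmain := avg_tendsto c Λ hdist
    rw [hp] at hmain
    unfold avgProb
    refine hmain.congr (fun T => ?_)
    congr 1
    exact (intervalIntegral.integral_congr (fun t _ => (hcong t))).symm
  · -- inequality
    have hstep1 : (∑ j : Fin m,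
          Real.sin ((j.val + 1) * Real.pi / (m + 1)) ^ 2
            * Real.sin ((j.val + 1) * (x.val + 1) * Real.pi / (m + 1)) ^ 2)
        ≤ ∑ j : Fin m, Real.sin ((j.val + 1) * (x.val + 1) * Real.pi / (m + 1)) ^ 2 := by
      refine Finset.sum_le_sum fun j _ => ?_
      exact mul_le_of_le_one_left (sq_nonneg _) (Real.sin_sq_le_one _)
    have hstep2 : (∑ j : Fin m, Real.sin ((j.val + 1) * (x.val + 1) * Real.pi / (m + 1)) ^ 2)
        ≤ ((m:ℝ) + 1) / 2 := by
      have hcos := sum_cos_fin m (2 * ((x.val:ℤ) + 1))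
      have hrw : ∀ j : Fin m, Real.sin ((j.val + 1) * (x.val + 1) * Real.pi / (m + 1)) ^ 2
          = 1/2 - Real.cos (((j.val:ℝ) + 1) * (((2 * ((x.val:ℤ) + 1) : ℤ):ℝ) * π / (m + 1))) / 2 := by
        intro j
        rw [Real.sin_sq_eq_half_sub]
        congr 2
        push_cast
        ring
      rw [Finset.sum_congr rfl fun j _ => hrw j, Finset.sum_sub_distrib, Finset.sum_const,
        Finset.card_univ, Fintype.card_fin, ← Finset.sum_div, hcos, nsmul_eq_mul]
      have hmn : (0:ℝ) ≤ (m:ℝ) := Nat.cast_nonneg m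
      split_ifs with h1 h2
      · push_cast; nlinarith
      · push_cast; nlinarith
      · push_cast; nlinarith
    calc (4 / ((m : ℝ) + 1) ^ 2) * (∑ j : Fin m,
          Real.sin ((j.val + 1) * Real.pi / (m + 1)) ^ 2
            * Real.sin ((j.val + 1) * (x.val + 1) * Real.pi / (m + 1)) ^ 2)
        ≤ (4 / ((m : ℝ) + 1) ^ 2) * (((m:ℝ) + 1) / 2) :=
          mul_le_mul_of_nonneg_left (hstep1.trans hstep2) (by positivity)
      _ = 2 / ((m:ℝ) + 1) := by field_simp; ring
      _ ≤ 2 / ((m : ℝ) + 1) + 4 / ((m : ℝ) + 1) ^ 2 :=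
          le_add_of_nonneg_right (by positivity)
end
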